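/- arXiv:math/0407432 — 4 statements merged into one kernel-verified Lean document; each statement's English description precedes it below -/
import Mathlib

section
/- Given x₀ ≤ 0 and real numbers y₀ > y_l, there exists exactly one real solution y of y'' = 6y² − x with y(x₀) = y₀ whose minimum value, achieved at a point x_min < x₀, equals y_l (i.e., y(x_min) = y_l and y'(x_min) = 0, and y_l is the minimum of y on [x_min, x₀]). -/
open Filter Set Topology

namespace Painleve

structure PSol (x₀ y₀ y_l : ℝ) where
  xm : ℝ
  y : ℝ → ℝ
  d : ℝ → ℝ
  hxm : xm < x₀
  hode : ∀ x ∈ Set.Icc xm x₀, HasDerivAt y (d x) x ∧ HasDerivAt d (6 * (y x) ^ 2 - x) x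
  hy0 : y x₀ = y₀
  hyl : y xm = y_l
  hd0 : d xm = 0
  hmin : ∀ x ∈ Set.Icc xm x₀, y_l ≤ y x

namespace PSol

variable {x₀ y₀ y_l : ℝ} (S : PSol x₀ y₀ y_l)

lemma contY : ContinuousOn S.y (Icc S.xm x₀) :=
  fun x hx => ((S.hode x hx).1.continuousAt).continuousWithinAt

lemma contD : ContinuousOn S.d (Icc S.xm x₀) :=
  fun x hx => ((S.hode x hx).2.continuousAt).continuousWithinAt

lemma dMono (hx₀ : x₀ ≤ 0) : StrictMonoOn S.d (Icc S.xm x₀) := by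
  apply strictMonoOn_of_deriv_pos (convex_Icc _ _) S.contD
  intro x hx
  rw [interior_Icc] at hx
  rw [(S.hode x (Ioo_subset_Icc_self hx)).2.deriv]
  have hxneg : x < 0 := lt_of_lt_of_le hx.2 hx₀
  nlinarith [sq_nonneg (S.y x)]

lemma dPos (hx₀ : x₀ ≤ 0) : ∀ x ∈ Ioc S.xm x₀, 0 < S.d x := by
  intro x hx
  have := S.dMono hx₀ (left_mem_Icc.2 S.hxm.le) (Ioc_subset_Icc_self hx) hx.1
  rwa [S.hd0] at this

lemma dNonneg (hx₀ : x₀ ≤ 0) : ∀ x ∈ Icc S.xm x₀, 0 ≤ S.d x := by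
  intro x hx
  rcases eq_or_lt_of_le hx.1 with h | h
  · rw [← h, S.hd0]
  · exact (S.dPos hx₀ x ⟨h, hx.2⟩).le

lemma yMono (hx₀ : x₀ ≤ 0) : StrictMonoOn S.y (Icc S.xm x₀) := by
  apply strictMonoOn_of_deriv_pos (convex_Icc _ _) S.contY
  intro x hx
  rw [interior_Icc] at hx
  rw [(S.hode x (Ioo_subset_Icc_self hx)).1.deriv]
  exact S.dPos hx₀ x ⟨hx.1, hx.2.le⟩

lemma yMapsTo (hx₀ : x₀ ≤ 0) : ∀ x ∈ Icc S.xm x₀, S.y x ∈ Icc y_l y₀ := by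
  intro x hx
  refine ⟨S.hmin x hx, ?_⟩
  have := (S.yMono hx₀).monotoneOn hx (right_mem_Icc.2 S.hxm.le) hx.2
  rwa [S.hy0] at this

lemma ySurj : ∀ w ∈ Icc y_l y₀, ∃ x ∈ Icc S.xm x₀, S.y x = w := by
  intro w hw
  have h := intermediate_value_Icc S.hxm.le S.contY
  rw [S.hyl, S.hy0] at h
  exact h hw

end PSol
end Painleve

namespace Painleve
namespace PSol

variable {x₀ y₀ y_l : ℝ} (S : PSol x₀ y₀ y_l)

noncomputable def g (w : ℝ) : ℝ := Function.invFunOn S.y (Icc S.xm x₀) w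

lemma g_mem {w : ℝ} (hw : w ∈ Icc y_l y₀) : S.g w ∈ Icc S.xm x₀ := by
  obtain ⟨x, hx, hxw⟩ := S.ySurj w hw
  exact Function.invFunOn_mem ⟨x, hx, hxw⟩

lemma g_eq {w : ℝ} (hw : w ∈ Icc y_l y₀) : S.y (S.g w) = w := by
  obtain ⟨x, hx, hxw⟩ := S.ySurj w hw
  exact Function.invFunOn_eq ⟨x, hx, hxw⟩

lemma g_left_inv (hx₀ : x₀ ≤ 0) {x : ℝ} (hx : x ∈ Icc S.xm x₀) : S.g (S.y x) = x := by
  apply (S.yMono hx₀).injOn (S.g_mem (S.yMapsTo hx₀ x hx)) hx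
  exact S.g_eq (S.yMapsTo hx₀ x hx)

lemma g_y0 (hx₀ : x₀ ≤ 0) : S.g y₀ = x₀ := by
  have := S.g_left_inv hx₀ (right_mem_Icc.2 S.hxm.le)
  rwa [S.hy0] at this

lemma g_yl (hx₀ : x₀ ≤ 0) : S.g y_l = S.xm := by
  have := S.g_left_inv hx₀ (left_mem_Icc.2 S.hxm.le)
  rwa [S.hyl] at this

lemma gMono (hx₀ : x₀ ≤ 0) : StrictMonoOn S.g (Icc y_l y₀) := by
  intro w hw z hz hwz
  rcases lt_trichotomy (S.g w) (S.g z) with h | h | h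
  · exact h
  · exfalso; have := congrArg S.y h; rw [S.g_eq hw, S.g_eq hz] at this; exact hwz.ne this
  · exfalso
    have := S.yMono hx₀ (S.g_mem hz) (S.g_mem hw) h
    rw [S.g_eq hw, S.g_eq hz] at this
    exact lt_asymm hwz this

lemma g_image (hx₀ : x₀ ≤ 0) : S.g '' (Icc y_l y₀) = Icc S.xm x₀ := by
  apply Subset.antisymm
  · rintro _ ⟨w, hw, rfl⟩; exact S.g_mem hw
  · intro x hx
    exact ⟨S.y x, S.yMapsTo hx₀ x hx, S.g_left_inv hx₀ hx⟩

lemma gCont (hx₀ : x₀ ≤ 0) (hlt : y_l < y₀) : ContinuousOn S.g (Icc y_l y₀) := by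
  intro w hw
  rcases eq_or_lt_of_le hw.1 with h1 | h1
  · -- w = y_l : continuity from the right
    subst h1
    apply ContinuousWithinAt.mono _ Icc_subset_Ici_self
    apply (S.gMono hx₀).continuousWithinAt_right_of_closure_image_mem_nhdsWithin
      (Icc_mem_nhdsGE hlt)
    rw [S.g_image hx₀, isClosed_Icc.closure_eq, S.g_yl hx₀]
    exact Icc_mem_nhdsGE S.hxm
  rcases eq_or_lt_of_le hw.2 with h2 | h2
  · -- w = y₀ : continuity from the left
    subst h2
    apply ContinuousWithinAt.mono _ Icc_subset_Iic_self
    apply (S.gMono hx₀).continuousWithinAt_left_of_closure_image_mem_nhdsWithin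
      (Icc_mem_nhdsLE hlt)
    rw [S.g_image hx₀, isClosed_Icc.closure_eq, S.g_y0 hx₀]
    exact Icc_mem_nhdsLE S.hxm
  · -- interior
    apply ContinuousAt.continuousWithinAt
    apply (S.gMono hx₀).continuousAt_of_image_mem_nhds (Icc_mem_nhds h1 h2)
    rw [S.g_image hx₀]
    apply Icc_mem_nhds
    · have := S.gMono hx₀ (left_mem_Icc.2 hlt.le) ⟨h1.le, h2.le⟩ h1
      rwa [S.g_yl hx₀] at this
    · have := S.gMono hx₀ ⟨h1.le, h2.le⟩ (right_mem_Icc.2 hlt.le) h2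
      rwa [S.g_y0 hx₀] at this

lemma g_mem_Ioc (hx₀ : x₀ ≤ 0) (hlt : y_l < y₀) {w : ℝ} (hw : w ∈ Ioc y_l y₀) :
    S.g w ∈ Ioc S.xm x₀ := by
  refine ⟨?_, (S.g_mem ⟨hw.1.le, hw.2⟩).2⟩
  have := S.gMono hx₀ (left_mem_Icc.2 hlt.le) ⟨hw.1.le, hw.2⟩ hw.1
  rwa [S.g_yl hx₀] at this

lemma hasDerivAt_g (hx₀ : x₀ ≤ 0) (hlt : y_l < y₀) {w : ℝ} (hw : w ∈ Ioo y_l y₀) :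
    HasDerivAt S.g (S.d (S.g w))⁻¹ w := by
  have hwmem : w ∈ Icc y_l y₀ := Ioo_subset_Icc_self hw
  have hcg : ContinuousAt S.g w :=
    (S.gCont hx₀ hlt w hwmem).continuousAt (Icc_mem_nhds hw.1 hw.2)
  have hf : HasDerivAt S.y (S.d (S.g w)) (S.g w) := (S.hode _ (S.g_mem hwmem)).1
  have hne : S.d (S.g w) ≠ 0 :=
    (S.dPos hx₀ _ (S.g_mem_Ioc hx₀ hlt ⟨hw.1, hw.2.le⟩)).ne'
  exact HasDerivAt.of_local_left_inverse hcg hf hne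
    (Filter.eventually_of_mem (Icc_mem_nhds hw.1 hw.2) (fun z hz => S.g_eq hz))

end PSol
end Painleve

namespace Painleve
namespace PSol

variable {x₀ y₀ y_l : ℝ} (S : PSol x₀ y₀ y_l)

noncomputable def q (w : ℝ) : ℝ := S.d (S.g w)

noncomputable def u (w : ℝ) : ℝ := (S.q w) ^ 2

lemma qCont (hx₀ : x₀ ≤ 0) (hlt : y_l < y₀) : ContinuousOn S.q (Icc y_l y₀) :=
  S.contD.comp (S.gCont hx₀ hlt) (fun w hw => S.g_mem hw)

lemma uCont (hx₀ : x₀ ≤ 0) (hlt : y_l < y₀) : ContinuousOn S.u (Icc y_l y₀) :=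
  (S.qCont hx₀ hlt).pow 2

lemma u_yl (hx₀ : x₀ ≤ 0) : S.u y_l = 0 := by
  simp [u, q, S.g_yl hx₀, S.hd0]

lemma u_y0 (hx₀ : x₀ ≤ 0) : S.u y₀ = (S.d x₀) ^ 2 := by
  simp [u, q, S.g_y0 hx₀]

lemma qPos (hx₀ : x₀ ≤ 0) (hlt : y_l < y₀) {w : ℝ} (hw : w ∈ Ioc y_l y₀) : 0 < S.q w :=
  S.dPos hx₀ _ (S.g_mem_Ioc hx₀ hlt hw)

lemma hasDerivAt_u (hx₀ : x₀ ≤ 0) (hlt : y_l < y₀) {w : ℝ} (hw : w ∈ Ioo y_l y₀) :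
    HasDerivAt S.u (2 * (6 * w ^ 2 - S.g w)) w := by
  have hwmem : w ∈ Icc y_l y₀ := Ioo_subset_Icc_self hw
  have hq : HasDerivAt S.q ((6 * (S.y (S.g w)) ^ 2 - S.g w) * (S.d (S.g w))⁻¹) w :=
    ((S.hode _ (S.g_mem hwmem)).2).comp w (S.hasDerivAt_g hx₀ hlt hw)
  have hu := hq.fun_pow 2
  have hne : S.d (S.g w) ≠ 0 := (S.qPos hx₀ hlt ⟨hw.1, hw.2.le⟩).ne'
  refine hu.congr_deriv ?_
  symm
  push_cast
  rw [S.g_eq hwmem]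
  simp only [q]
  field_simp

end PSol

open PSol

/-- Core comparison: it is impossible that the slope of `S1` at `x₀` strictly
exceeds that of `S2`. -/
lemma not_slope_lt {x₀ y₀ y_l : ℝ} (hx₀ : x₀ ≤ 0) (hlt : y_l < y₀)
    (S1 S2 : PSol x₀ y₀ y_l) (hgt : S2.d x₀ < S1.d x₀) : False := by
  have hs₂ : 0 < S2.d x₀ := S2.dPos hx₀ x₀ ⟨S2.hxm, le_refl _⟩
  have hs₁ : 0 < S1.d x₀ := lt_trans hs₂ hgt
  set D : ℝ → ℝ := fun w => S1.u w - S2.u w with hD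
  have hDy0 : 0 < D y₀ := by
    simp only [hD, S1.u_y0 hx₀, S2.u_y0 hx₀]
    nlinarith
  have hDyl : D y_l = 0 := by simp [hD, S1.u_yl hx₀, S2.u_yl hx₀]
  have hDcont : ContinuousOn D (Icc y_l y₀) :=
    (S1.uCont hx₀ hlt).sub (S2.uCont hx₀ hlt)
  have hDderiv : ∀ w ∈ Ioo y_l y₀,
      HasDerivAt D (-2 * (S1.g w - S2.g w)) w := by
    intro w hw
    have := (S1.hasDerivAt_u hx₀ hlt hw).fun_sub (S2.hasDerivAt_u hx₀ hlt hw)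
    refine this.congr_deriv ?_
    ring
  -- slope of g at y₀ tends to the reciprocal slope
  have slope_lim : ∀ (S : PSol x₀ y₀ y_l), 0 < S.d x₀ →
      Tendsto (fun w => (S.g w - x₀) / (w - y₀)) (𝓝[<] y₀) (𝓝 (S.d x₀)⁻¹) := by
    intro S hs
    have h1 : Tendsto (slope S.y x₀) (𝓝[≠] x₀) (𝓝 (S.d x₀)) :=
      hasDerivAt_iff_tendsto_slope.mp (S.hode x₀ (right_mem_Icc.2 S.hxm.le)).1
    have h2a : Tendsto S.g (𝓝[<] y₀) (𝓝 x₀) := by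
      have hcw : ContinuousWithinAt S.g (Icc y_l y₀) y₀ :=
        S.gCont hx₀ hlt y₀ (right_mem_Icc.2 hlt.le)
      rw [ContinuousWithinAt, S.g_y0 hx₀] at hcw
      exact hcw.mono_left (nhdsWithin_le_of_mem
        (Filter.mem_of_superset (Ioo_mem_nhdsLT hlt) Ioo_subset_Icc_self))
    have h2 : Tendsto S.g (𝓝[<] y₀) (𝓝[≠] x₀) := by
      apply tendsto_nhdsWithin_of_tendsto_nhds_of_eventually_within _ h2a
      filter_upwards [Ioo_mem_nhdsLT hlt] with w hw
      have := S.gMono hx₀ (Ioo_subset_Icc_self hw) (right_mem_Icc.2 hlt.le) hw.2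
      rw [S.g_y0 hx₀] at this
      exact ne_of_lt this
    have h3 : Tendsto (fun w => slope S.y x₀ (S.g w)) (𝓝[<] y₀) (𝓝 (S.d x₀)) := h1.comp h2
    have h4 : Tendsto (fun w => (slope S.y x₀ (S.g w))⁻¹) (𝓝[<] y₀) (𝓝 (S.d x₀)⁻¹) :=
      h3.inv₀ hs.ne'
    apply h4.congr'
    filter_upwards [Ioo_mem_nhdsLT hlt] with w hw
    rw [slope_def_field, S.g_eq (Ioo_subset_Icc_self hw), S.hy0, inv_div]
  -- g₁ - g₂ is eventually positive to the left of y₀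
  have hh : ∀ᶠ w in 𝓝[<] y₀, 0 < S1.g w - S2.g w := by
    have hsub := (slope_lim S1 hs₁).sub (slope_lim S2 hs₂)
    have hneg : (S1.d x₀)⁻¹ - (S2.d x₀)⁻¹ < 0 := by
      rw [sub_neg]
      exact inv_strictAnti₀ hs₂ hgt
    have hev := hsub.eventually (gt_mem_nhds hneg)
    filter_upwards [hev, self_mem_nhdsWithin] with w hw1 (hw2 : w ∈ Iio y₀)
    rw [div_sub_div_same] at hw1
    have hwy : w - y₀ < 0 := sub_neg.2 hw2
    rw [sub_sub_sub_cancel_right] at hw1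
    rcases div_neg_iff.1 hw1 with ⟨h, _⟩ | ⟨_, h⟩
    · exact h
    · linarith
  -- extract an interval (w₁, y₀) on which g₁ - g₂ > 0
  obtain ⟨w₁', hw₁', hsub⟩ := mem_nhdsLT_iff_exists_Ioo_subset.1 hh
  set w₁ : ℝ := max w₁' y_l with hw₁def
  have hw₁lt : w₁ < y₀ := max_lt hw₁' hlt
  have hw₁ge : y_l ≤ w₁ := le_max_right _ _
  have hpos : ∀ w ∈ Ioo w₁ y₀, 0 < S1.g w - S2.g w := by
    intro w hw
    exact hsub ⟨lt_of_le_of_lt (le_max_left _ _) hw.1, hw.2⟩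
  -- helper: D is strictly decreasing on [a, y₀] whenever g₁ - g₂ > 0 on (a, y₀)
  have hanti : ∀ a ∈ Ico y_l y₀, (∀ w ∈ Ioo a y₀, 0 < S1.g w - S2.g w) →
      StrictAntiOn D (Icc a y₀) := by
    intro a ha hap
    apply strictAntiOn_of_deriv_neg (convex_Icc _ _)
      (hDcont.mono (Icc_subset_Icc ha.1 le_rfl))
    intro x hx
    rw [interior_Icc] at hx
    rw [(hDderiv x ⟨lt_of_le_of_lt ha.1 hx.1, hx.2⟩).deriv]
    have := hap x hx
    linarith
  -- the set for continuous induction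
  set A : Set ℝ := {w | w ∈ Icc y_l y₀ ∧ ∀ z ∈ Icc w y₀, D y₀ ≤ D z} with hAdef
  have hw₂mem : (w₁ + y₀) / 2 ∈ Ioo w₁ y₀ := ⟨by linarith, by linarith⟩
  set w₂ : ℝ := (w₁ + y₀) / 2 with hw₂def
  have hw₂A : w₂ ∈ A := by
    constructor
    · exact ⟨le_trans hw₁ge hw₂mem.1.le, hw₂mem.2.le⟩
    · intro z hz
      rcases eq_or_lt_of_le hz.2 with h | h
      · rw [h]
      · have := hanti w₂ ⟨le_trans hw₁ge hw₂mem.1.le, hw₂mem.2⟩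
          (fun w hw => hpos w ⟨lt_trans hw₂mem.1 hw.1, hw.2⟩) hz
          (right_mem_Icc.2 (le_trans hz.1 hz.2)) h
        exact this.le
  have hAne : A.Nonempty := ⟨w₂, hw₂A⟩
  have hbdd : BddBelow A := ⟨y_l, fun a ha => ha.1.1⟩
  set wst : ℝ := sInf A with hwstdef
  have hwst_ge : y_l ≤ wst := le_csInf hAne fun a ha => ha.1.1
  have hwst_lt : wst < y₀ := lt_of_le_of_lt (csInf_le hbdd hw₂A) hw₂mem.2
  have hA' : ∀ z ∈ Ioc wst y₀, D y₀ ≤ D z := by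
    intro z hz
    obtain ⟨a, haA, haz⟩ := exists_lt_of_csInf_lt hAne hz.1
    exact haA.2 z ⟨haz.le, hz.2⟩
  have hC1 : D y₀ ≤ D wst := by
    have hIccmem : Icc y_l y₀ ∈ 𝓝[>] wst :=
      mem_of_superset (Ioc_mem_nhdsGT hwst_lt)
        (fun z hz => ⟨le_trans hwst_ge hz.1.le, hz.2⟩)
    have ht : Tendsto D (𝓝[>] wst) (𝓝 (D wst)) :=
      (hDcont wst ⟨hwst_ge, hwst_lt.le⟩).mono_left (nhdsWithin_le_of_mem hIccmem)
    apply ge_of_tendsto ht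
    filter_upwards [Ioc_mem_nhdsGT hwst_lt] with z hz
    exact hA' z hz
  have hwst_eq : wst = y_l := by
    by_contra hne
    have hylwst : y_l < wst := lt_of_le_of_ne hwst_ge (Ne.symm hne)
    have hD_all : ∀ z ∈ Icc wst y₀, D y₀ ≤ D z := by
      intro z hz
      rcases eq_or_lt_of_le hz.1 with h | h
      · rw [← h]; exact hC1
      · exact hA' z ⟨h, hz.2⟩
    have hq21 : ∀ w ∈ Ioo wst y₀, S2.q w < S1.q w := by
      intro w hw
      have hwI : w ∈ Ioc y_l y₀ := ⟨lt_of_le_of_lt hwst_ge hw.1, hw.2.le⟩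
      have h2 : 0 < S2.q w := S2.qPos hx₀ hlt hwI
      have h1 : 0 ≤ S1.q w := (S1.qPos hx₀ hlt hwI).le
      have hDw : D y₀ ≤ D w := hD_all w ⟨hw.1.le, hw.2.le⟩
      have : (S2.q w) ^ 2 < (S1.q w) ^ 2 := by
        have : D y₀ ≤ S1.u w - S2.u w := hDw
        simp only [PSol.u] at this
        nlinarith
      nlinarith
    set h : ℝ → ℝ := fun w => S1.g w - S2.g w with hhdef
    have hderiv_h : ∀ w ∈ Ioo wst y₀, HasDerivAt h ((S1.q w)⁻¹ - (S2.q w)⁻¹) w := by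
      intro w hw
      have hwI : w ∈ Ioo y_l y₀ := ⟨lt_of_le_of_lt hwst_ge hw.1, hw.2⟩
      exact (S1.hasDerivAt_g hx₀ hlt hwI).sub (S2.hasDerivAt_g hx₀ hlt hwI)
    have hanti_h : StrictAntiOn h (Icc wst y₀) := by
      apply strictAntiOn_of_deriv_neg (convex_Icc _ _)
        (((S1.gCont hx₀ hlt).sub (S2.gCont hx₀ hlt)).mono (Icc_subset_Icc hwst_ge le_rfl))
      intro x hx
      rw [interior_Icc] at hx
      rw [HasDerivAt.deriv (f := S1.g - S2.g) (hderiv_h x hx)]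
      have hq := hq21 x hx
      have h2 : 0 < S2.q x := S2.qPos hx₀ hlt ⟨lt_of_le_of_lt hwst_ge hx.1, hx.2.le⟩
      have : (S1.q x)⁻¹ < (S2.q x)⁻¹ := by
        apply inv_strictAnti₀ h2 hq
      linarith
    have hy₀h : h y₀ = 0 := by
      simp only [hhdef, S1.g_y0 hx₀, S2.g_y0 hx₀, sub_self]
    have hposh : ∀ w ∈ Ioo wst y₀, 0 < h w := by
      intro w hw
      have := hanti_h ⟨hw.1.le, hw.2.le⟩ (right_mem_Icc.2 hwst_lt.le) hw.2
      rwa [hy₀h] at this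
    have hanti_D : StrictAntiOn D (Icc wst y₀) :=
      hanti wst ⟨hwst_ge, hwst_lt⟩ hposh
    have hDwst : D y₀ < D wst :=
      hanti_D (left_mem_Icc.2 hwst_lt.le) (right_mem_Icc.2 hwst_lt.le) hwst_lt
    have hcw : ContinuousWithinAt D (Icc y_l y₀) wst := hDcont wst ⟨hwst_ge, hwst_lt.le⟩
    have hev : ∀ᶠ z in 𝓝[Icc y_l y₀] wst, D y₀ < D z :=
      hcw.eventually (eventually_gt_nhds hDwst)
    obtain ⟨δ, hδ, hball⟩ := Metric.mem_nhdsWithin_iff.1 hev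
    set w'' : ℝ := max y_l (wst - δ / 2) with hw''def
    have hw''lt : w'' < wst := max_lt hylwst (by linarith)
    have hw''A : w'' ∈ A := by
      constructor
      · exact ⟨le_max_left _ _, le_trans hw''lt.le hwst_lt.le⟩
      · intro z hz
        rcases le_or_gt wst z with h | h
        · exact hD_all z ⟨h, hz.2⟩
        · have hzball : z ∈ Metric.ball wst δ := by
            rw [Metric.mem_ball, Real.dist_eq, abs_of_nonpos (by linarith)]
            have : wst - δ / 2 ≤ w'' := le_max_right _ _
            have := hz.1
            linarith
          have hzIcc : z ∈ Icc y_l y₀ := ⟨le_trans (le_max_left _ _) hz.1, hz.2⟩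
          exact (hball ⟨hzball, hzIcc⟩).le
    have := csInf_le hbdd hw''A
    linarith
  rw [hwst_eq, hDyl] at hC1
  linarith
end Painleve

namespace Painleve

theorem slope_unique {x₀ y₀ y_l : ℝ} (hx₀ : x₀ ≤ 0) (hlt : y_l < y₀)
    (S1 S2 : PSol x₀ y₀ y_l) : S1.d x₀ = S2.d x₀ :=
  le_antisymm (not_lt.1 fun h => not_slope_lt hx₀ hlt S1 S2 h)
    (not_lt.1 fun h => not_slope_lt hx₀ hlt S2 S1 h)

/-! ### Existence: the vector field and local solvability -/

/-- The Painlevé I vector field as a first-order system on `ℝ × ℝ`. -/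
def pv (t : ℝ) (p : ℝ × ℝ) : ℝ × ℝ := (p.2, 6 * p.1 ^ 2 - t)

lemma mem_ball_bounds {p : ℝ × ℝ} {A : ℝ} (hp : p ∈ Metric.closedBall (0 : ℝ × ℝ) (A + 1)) :
    |p.1| ≤ A + 1 ∧ |p.2| ≤ A + 1 := by
  simp only [Metric.mem_closedBall, dist_zero_right, Prod.norm_def, Real.norm_eq_abs,
    max_le_iff] at hp
  exact hp

lemma pv_lipschitz (A : ℝ) (hA : 0 ≤ A) (t : ℝ) :
    LipschitzOnWith ⟨12 * A + 13, by positivity⟩ (pv t) (Metric.closedBall (0 : ℝ × ℝ) (A + 1)) := by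
  apply LipschitzOnWith.of_dist_le_mul
  intro p hp q hq
  obtain ⟨hp1, hp2⟩ := mem_ball_bounds hp
  obtain ⟨hq1, hq2⟩ := mem_ball_bounds hq
  rw [Prod.dist_eq, Prod.dist_eq]
  simp only [pv, Real.dist_eq, NNReal.coe_mk]
  have habs1 : (0:ℝ) ≤ |p.1 - q.1| := abs_nonneg _
  have habs2 : (0:ℝ) ≤ |p.2 - q.2| := abs_nonneg _
  have hm1 := le_max_left (|p.1 - q.1|) (|p.2 - q.2|)
  have hm2 := le_max_right (|p.1 - q.1|) (|p.2 - q.2|)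
  have key : |6 * p.1 ^ 2 - t - (6 * q.1 ^ 2 - t)| ≤ (12 * A + 13) * |p.1 - q.1| := by
    have h1 : 6 * p.1 ^ 2 - t - (6 * q.1 ^ 2 - t) = 6 * (p.1 + q.1) * (p.1 - q.1) := by ring
    rw [h1, abs_mul, abs_mul]
    have h2 : |p.1 + q.1| ≤ 2 * A + 2 := by
      calc |p.1 + q.1| ≤ |p.1| + |q.1| := abs_add_le _ _
        _ ≤ 2 * A + 2 := by linarith
    have h6 : |(6:ℝ)| = 6 := by norm_num
    rw [h6]
    nlinarith
  change _ ≤ (12 * A + 13) * _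
  apply max_le
  · nlinarith
  · calc |6 * p.1 ^ 2 - t - (6 * q.1 ^ 2 - t)| ≤ (12 * A + 13) * |p.1 - q.1| := key
      _ ≤ (12 * A + 13) * max (|p.1 - q.1|) (|p.2 - q.2|) := by nlinarith

/-- The uniform local step size on the box of size `A`. -/
noncomputable def pδ (A : ℝ) : ℝ := (16 * (A + 1) ^ 2)⁻¹

lemma pδ_pos (A : ℝ) (hA : 0 ≤ A) : 0 < pδ A := by
  have : (0:ℝ) < 16 * (A + 1) ^ 2 := by positivity
  exact inv_pos.2 this

lemma pδ_le_one (A : ℝ) (hA : 0 ≤ A) : pδ A ≤ 1/16 := by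
  rw [pδ]
  rw [inv_le_comm₀ (by positivity) (by norm_num)]
  nlinarith

/-- Uniform local existence, with two-sided (full) derivatives on the closed interval. -/
lemma local_exists (A : ℝ) (hA : 0 ≤ A) (t₀ : ℝ) (p₀ : ℝ × ℝ)
    (ht : |t₀| ≤ A) (h1 : |p₀.1| ≤ A) (h2 : |p₀.2| ≤ A) :
    ∃ f : ℝ → ℝ × ℝ, f t₀ = p₀ ∧
      ∀ t ∈ Icc (t₀ - pδ A) (t₀ + pδ A), HasDerivAt f (pv t (f t)) t := by
  have hδpos := pδ_pos A hA
  have hδ1 := pδ_le_one A hA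
  set δ := pδ A with hδdef
  set C : ℝ := 8 * (A + 1) ^ 2 with hCdef
  have hball : Metric.closedBall p₀ ((1 : NNReal) : ℝ) ⊆ Metric.closedBall (0 : ℝ × ℝ) (A + 1) := by
    rw [NNReal.coe_one]
    apply Metric.closedBall_subset_closedBall'
    rw [dist_zero_right, Prod.norm_def]
    simp only [Real.norm_eq_abs]
    have := max_le h1 h2
    linarith
  have hpl : IsPicardLindelof pv (tmin := t₀ - 2*δ) (tmax := t₀ + 2*δ)
      ⟨t₀, by constructor <;> linarith⟩ p₀ 1 0 ⟨C, by positivity⟩ ⟨12 * A + 13, by positivity⟩ := by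
    constructor
    · intro t ht'
      exact (pv_lipschitz A hA t).mono hball
    · intro x hx
      apply Continuous.continuousOn
      unfold pv
      fun_prop
    · intro t ht' x hx
      show ‖pv t x‖ ≤ C
      obtain ⟨hx1, hx2⟩ := mem_ball_bounds (hball hx)
      have htb : |t| ≤ A + 1 := by
        rw [abs_le] at ht ⊢
        rw [mem_Icc] at ht'
        constructor <;> nlinarith [ht.1, ht.2, ht'.1, ht'.2]
      rw [Prod.norm_def]
      simp only [Real.norm_eq_abs]
      apply max_le
      · unfold pv; dsimp only; nlinarith
      · unfold pv; dsimp only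
        have : |6 * x.1 ^ 2 - t| ≤ 6 * x.1 ^ 2 + |t| := by
          calc |6 * x.1 ^ 2 - t| ≤ |6 * x.1 ^ 2| + |t| := abs_sub _ _
            _ = 6 * x.1 ^ 2 + |t| := by rw [abs_of_nonneg (by positivity)]
        have hx1sq : x.1 ^ 2 ≤ (A + 1) ^ 2 := by nlinarith [abs_nonneg x.1, sq_abs x.1]
        nlinarith
    · show C * max (t₀ + 2*δ - t₀) (t₀ - (t₀ - 2*δ)) ≤ ((1 : NNReal) : ℝ) - ((0 : NNReal) : ℝ)
      rw [NNReal.coe_one, NNReal.coe_zero, sub_zero]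
      have hmax : max (t₀ + 2*δ - t₀) (t₀ - (t₀ - 2*δ)) = 2*δ := by
        rw [show t₀ + 2*δ - t₀ = 2*δ by ring, show t₀ - (t₀ - 2*δ) = 2*δ by ring, max_self]
      rw [hmax]
      have hne : (A : ℝ) + 1 ≠ 0 := by positivity
      have : C * (2 * δ) = 1 := by
        rw [hCdef, hδdef, pδ]
        field_simp
        ring
      linarith [this]
  obtain ⟨f, hf0, hf⟩ := hpl.exists_eq_forall_mem_Icc_hasDerivWithinAt₀
  refine ⟨f, hf0, fun t htm => ?_⟩
  have hsub : Icc (t₀ - δ) (t₀ + δ) ⊆ Icc (t₀ - 2*δ) (t₀ + 2*δ) :=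
    Icc_subset_Icc (by linarith) (by linarith)
  have hm1 : t₀ - 2*δ < t := by have := htm.1; linarith
  have hm2 : t < t₀ + 2*δ := by have := htm.2; linarith
  exact (hf t (hsub htm)).hasDerivAt (Icc_mem_nhds hm1 hm2)

end Painleve

namespace Painleve

lemma hasDerivAt_fst {f : ℝ → ℝ × ℝ} {p : ℝ × ℝ} {t : ℝ} (h : HasDerivAt f p t) :
    HasDerivAt (fun s => (f s).1) p.1 t := by
  simpa using (h.hasFDerivAt.fst).hasDerivAt

lemma hasDerivAt_snd {f : ℝ → ℝ × ℝ} {p : ℝ × ℝ} {t : ℝ} (h : HasDerivAt f p t) :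
    HasDerivAt (fun s => (f s).2) p.2 t := by
  simpa using (h.hasFDerivAt.snd).hasDerivAt

/-- Monotonicity from pointwise derivatives on a closed interval. -/
lemma monoOn_of_hasDeriv {f f' : ℝ → ℝ} {a b : ℝ}
    (hd : ∀ t ∈ Icc a b, HasDerivAt f (f' t) t) (h0 : ∀ t ∈ Ioo a b, 0 ≤ f' t) :
    MonotoneOn f (Icc a b) := by
  apply monotoneOn_of_deriv_nonneg (convex_Icc _ _)
    (fun t htm => (hd t htm).continuousAt.continuousWithinAt)
  · intro t htm
    rw [interior_Icc] at htm
    exact ((hd t (Ioo_subset_Icc_self htm)).differentiableAt).differentiableWithinAt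
  · intro t htm
    rw [interior_Icc] at htm
    rw [(hd t (Ioo_subset_Icc_self htm)).deriv]
    exact h0 t htm

/-- Gluing of two local solutions at a common junction. -/
lemma glue_left {f g : ℝ → ℝ × ℝ} {a b c : ℝ} (hab : a ≤ b) (hbc : b ≤ c)
    (hf : ∀ t ∈ Icc b c, HasDerivAt f (pv t (f t)) t)
    (hg : ∀ t ∈ Icc a b, HasDerivAt g (pv t (g t)) t)
    (heq : g b = f b) :
    ∃ h : ℝ → ℝ × ℝ, (∀ t ∈ Icc a c, HasDerivAt h (pv t (h t)) t) ∧
      (∀ t ∈ Icc b c, h t = f t) ∧ (∀ t ∈ Icc a b, h t = g t) := by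
  set h : ℝ → ℝ × ℝ := fun t => if t < b then g t else f t with hh
  have hhf : ∀ t, b ≤ t → h t = f t := fun t htb => by simp [hh, not_lt.2 htb]
  have hhg : ∀ t, t ≤ b → h t = g t := by
    intro t htb
    rcases lt_or_eq_of_le htb with hl | hE
    · simp [hh, hl]
    · subst hE; simp [hh, heq]
  refine ⟨h, ?_, fun t htm => hhf t htm.1, fun t htm => hhg t htm.2⟩
  intro t htm
  rcases lt_trichotomy t b with hcase | hcase | hcase
  · have hder : HasDerivAt g (pv t (g t)) t := hg t ⟨htm.1, hcase.le⟩
    have hev : h =ᶠ[𝓝 t] g := by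
      filter_upwards [Iio_mem_nhds hcase] with z hz
      exact hhg z (le_of_lt hz)
    rw [show h t = g t from hhg t hcase.le]
    exact hder.congr_of_eventuallyEq hev
  · subst hcase
    rw [hhf t le_rfl]
    have h1 : HasDerivWithinAt h (pv t (f t)) (Iic t) t := by
      have := (hg t ⟨htm.1, le_rfl⟩).hasDerivWithinAt (s := Iic t)
      rw [heq] at this
      exact this.congr (fun z hz => hhg z hz) (hhg t le_rfl)
    have h2 : HasDerivWithinAt h (pv t (f t)) (Ici t) t := by
      have := (hf t ⟨le_rfl, htm.2⟩).hasDerivWithinAt (s := Ici t)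
      exact this.congr (fun z hz => hhf z hz) (hhf t le_rfl)
    have h3 := h1.union h2
    rw [Iic_union_Ici] at h3
    exact hasDerivWithinAt_univ.1 h3
  · have hder : HasDerivAt f (pv t (f t)) t := hf t ⟨hcase.le, htm.2⟩
    have hev : h =ᶠ[𝓝 t] f := by
      filter_upwards [Ioi_mem_nhds hcase] with z hz
      exact hhf z (le_of_lt hz)
    rw [show h t = f t from hhf t hcase.le]
    exact hder.congr_of_eventuallyEq hev

end Painleve

namespace Painleve

lemma slope_mono {f : ℝ → ℝ × ℝ} {a b : ℝ} (hb : b ≤ 0)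
    (hsol : ∀ t ∈ Icc a b, HasDerivAt f (pv t (f t)) t) :
    MonotoneOn (fun t => (f t).2) (Icc a b) := by
  apply monoOn_of_hasDeriv (f' := fun t => 6 * (f t).1 ^ 2 - t)
  · intro t ht; exact hasDerivAt_snd (hsol t ht)
  · intro t ht
    nlinarith [sq_nonneg (f t).1, ht.2]

lemma y_mono {f : ℝ → ℝ × ℝ} {a b : ℝ}
    (hsol : ∀ t ∈ Icc a b, HasDerivAt f (pv t (f t)) t)
    (hpos : ∀ t ∈ Icc a b, 0 ≤ (f t).2) :
    MonotoneOn (fun t => (f t).1) (Icc a b) := by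
  apply monoOn_of_hasDeriv (f' := fun t => (f t).2)
  · intro t ht; exact hasDerivAt_fst (hsol t ht)
  · intro t ht; exact hpos t (Ioo_subset_Icc_self ht)

lemma y_lower {f : ℝ → ℝ × ℝ} {a b s : ℝ} (hab : a ≤ b)
    (hsol : ∀ t ∈ Icc a b, HasDerivAt f (pv t (f t)) t)
    (hle : ∀ t ∈ Icc a b, (f t).2 ≤ s) :
    ∀ t ∈ Icc a b, (f b).1 - s * (b - t) ≤ (f t).1 := by
  intro t ht
  have hmono : MonotoneOn (fun t => s * t - (f t).1) (Icc a b) := by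
    apply monoOn_of_hasDeriv (f' := fun t => s - (f t).2)
    · intro z hz
      have := ((hasDerivAt_id z).const_mul s).fun_sub (hasDerivAt_fst (hsol z hz))
      exact this.congr_deriv (by simp [pv])
    · intro z hz
      have := hle z (Ioo_subset_Icc_self hz)
      linarith
  have := hmono ht (right_mem_Icc.2 hab) ht.2
  dsimp at this
  linarith

lemma slope_estimate {f : ℝ → ℝ × ℝ} {a b : ℝ} (hab : a ≤ b) (hb : b ≤ 0)
    (hsol : ∀ t ∈ Icc a b, HasDerivAt f (pv t (f t)) t) :
    (f a).2 ≤ (f b).2 - (b - a) ^ 2 / 2 := by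
  have hmono : MonotoneOn (fun t => (f t).2 + (b - t) ^ 2 / 2) (Icc a b) := by
    apply monoOn_of_hasDeriv (f' := fun t => (6 * (f t).1 ^ 2 - t) + -(b - t))
    · intro z hz
      apply (hasDerivAt_snd (hsol z hz)).add
      have h1 : HasDerivAt (fun t => (b - t) ^ 2) (2 * (b - z) ^ 1 * (0 - 1)) z :=
        ((hasDerivAt_const z b).fun_sub (hasDerivAt_id z)).fun_pow 2
      have h2 := h1.div_const 2
      refine h2.congr_deriv ?_
      ring
    · intro z hz
      nlinarith [sq_nonneg (f z).1]
  have := hmono (left_mem_Icc.2 hab) (right_mem_Icc.2 hab) hab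
  dsimp at this
  have hz : (b - b) ^ 2 / 2 = 0 := by ring
  rw [hz] at this
  linarith

/-- Backward solution from `(x₀, (y₀, s))` until the slope vanishes. -/
lemma backward (x₀ y₀ : ℝ) (hx₀ : x₀ ≤ 0) (s : ℝ) (hs : 0 < s) :
    ∃ (xm : ℝ) (f : ℝ → ℝ × ℝ), xm < x₀ ∧ x₀ - (Real.sqrt (2*s) + 1) ≤ xm ∧
      f x₀ = (y₀, s) ∧ (∀ t ∈ Icc xm x₀, HasDerivAt f (pv t (f t)) t) ∧
      (f xm).2 = 0 ∧ (∀ t ∈ Icc xm x₀, 0 ≤ (f t).2 ∧ (f t).2 ≤ s) := by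
  by_contra hG
  set R : ℝ := Real.sqrt (2*s) with hRdef
  have hR0 : 0 ≤ R := Real.sqrt_nonneg _
  set A : ℝ := |x₀| + R + 1 + |y₀| + s * (R + 1) + s with hAdef
  have hA : 0 ≤ A := by positivity
  have hδpos := pδ_pos A hA
  have hδ1 := pδ_le_one A hA
  set δ := pδ A with hδdef
  set B : Set ℝ := {T : ℝ | 0 ≤ T ∧ ∃ f : ℝ → ℝ × ℝ, f x₀ = (y₀, s) ∧
    (∀ t ∈ Icc (x₀ - T) x₀, HasDerivAt f (pv t (f t)) t) ∧
    (∀ t ∈ Icc (x₀ - T) x₀, 0 < (f t).2 ∧ (f t).2 ≤ s)} with hBdef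
  -- `B` is bounded above by `R`
  have bddB : ∀ T ∈ B, T ≤ R := by
    rintro T ⟨hT0, f, hfx₀, hsol, hslope⟩
    have hTx : x₀ - T ≤ x₀ := by linarith
    have hest := slope_estimate hTx hx₀ hsol
    have hposT := (hslope (x₀ - T) (left_mem_Icc.2 hTx)).1
    rw [hfx₀] at hest
    have hT2 : T ^ 2 ≤ 2 * s := by
      have : (x₀ - (x₀ - T)) = T := by ring
      rw [this] at hest
      nlinarith
    rw [hRdef]
    rw [show T = Real.sqrt (T^2) from (Real.sqrt_sq hT0).symm]
    exact Real.sqrt_le_sqrt hT2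
  -- base case
  have base : (0:ℝ) ∈ B := by
    refine ⟨le_rfl, ?_⟩
    obtain ⟨f, hf0, hf⟩ := local_exists A hA x₀ (y₀, s)
      (by rw [hAdef]; nlinarith [abs_nonneg y₀])
      (by dsimp; rw [hAdef]; nlinarith [abs_nonneg x₀])
      (by dsimp; rw [hAdef, abs_of_pos hs]; nlinarith [abs_nonneg x₀, abs_nonneg y₀])
    refine ⟨f, hf0, ?_, ?_⟩ <;> intro t ht <;>
      have htt : t = x₀ := le_antisymm ht.2 (by simpa using ht.1)
    · subst htt
      exact hf t (by constructor <;> [linarith;linarith])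
    · subst htt
      rw [hf0]
      exact ⟨hs, le_rfl⟩
  -- extension step
  have step : ∀ T ∈ B, T + δ ∈ B := by
    rintro T ⟨hT0, f, hfx₀, hsol, hslope⟩
    have hTR : T ≤ R := bddB T ⟨hT0, f, hfx₀, hsol, hslope⟩
    set e : ℝ := x₀ - T with hedef
    have hex : e ≤ x₀ := by rw [hedef]; linarith
    have he_mem : e ∈ Icc e x₀ := left_mem_Icc.2 hex
    have hylow := y_lower hex hsol (fun t ht => (hslope t ht).2)
    have hyup : ∀ t ∈ Icc e x₀, (f t).1 ≤ y₀ := by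
      intro t ht
      have := y_mono hsol
        (fun z hz => le_of_lt (hslope z hz).1) ht (right_mem_Icc.2 hex) ht.2
      dsimp at this
      rw [hfx₀] at this
      exact this
    -- bounds at the left endpoint
    have hb1 : |e| ≤ A := by
      rw [hedef, hAdef]
      rw [abs_le]
      constructor <;> cases' abs_le.1 (le_refl |x₀|) with h h <;> nlinarith [abs_nonneg y₀,
        neg_abs_le x₀, le_abs_self x₀, mul_nonneg hs.le (by linarith : (0:ℝ) ≤ R + 1)]
    have hb2 : |(f e).1| ≤ A := by
      have h1 := hylow e (left_mem_Icc.2 hex)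
      have h2 := hyup e (left_mem_Icc.2 hex)
      rw [hfx₀] at h1
      dsimp at h1
      rw [abs_le, hAdef]
      have hsx : s * (x₀ - e) ≤ s * (R + 1) := by
        apply mul_le_mul_of_nonneg_left _ hs.le
        rw [hedef]; linarith
      constructor <;> nlinarith [neg_abs_le y₀, le_abs_self y₀, abs_nonneg x₀, hR0]
    have hb3 : |(f e).2| ≤ A := by
      have h1 := (hslope e he_mem).1
      have h2 := (hslope e he_mem).2
      rw [abs_of_pos h1, hAdef]
      nlinarith [abs_nonneg x₀, abs_nonneg y₀, mul_nonneg hs.le (by linarith : (0:ℝ) ≤ R + 1)]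
    obtain ⟨g, hg0, hg⟩ := local_exists A hA e (f e) hb1 hb2 hb3
    obtain ⟨h, hsolh, hhf, hhg⟩ := glue_left (by linarith : e - δ ≤ e) hex hsol
      (fun t ht => hg t ⟨ht.1, by linarith [ht.2]⟩) hg0
    have hhx₀ : h x₀ = (y₀, s) := by rw [hhf x₀ (right_mem_Icc.2 hex), hfx₀]
    -- slope positivity on the extension
    have hposh : ∀ t ∈ Icc (e - δ) x₀, 0 < (h t).2 := by
      by_contra hneg
      push_neg at hneg
      obtain ⟨t₁, ht₁, ht₁le⟩ := hneg
      have hcont : ContinuousOn (fun t => (h t).2) (Icc t₁ x₀) := by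
        intro t ht
        exact (hasDerivAt_snd (hsolh t ⟨le_trans ht₁.1 ht.1, ht.2⟩)).continuousAt.continuousWithinAt
      have hmem0 : (0:ℝ) ∈ Icc ((h t₁).2) ((h x₀).2) := by
        rw [hhx₀]
        exact ⟨ht₁le, hs.le⟩
      obtain ⟨xm, hxm_mem, hxm0⟩ := intermediate_value_Icc ht₁.2 hcont hmem0
      change (h xm).2 = 0 at hxm0
      apply hG
      have hxm_solint : Icc xm x₀ ⊆ Icc (e - δ) x₀ := Icc_subset_Icc (le_trans ht₁.1 hxm_mem.1) le_rfl
      have hmono := slope_mono hx₀ (fun t ht => hsolh t (hxm_solint ht))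
      have hxmlt : xm < x₀ := by
        rcases lt_or_eq_of_le hxm_mem.2 with hlt | hEq
        · exact hlt
        · exfalso; rw [hEq, hhx₀] at hxm0; exact hs.ne' hxm0
      refine ⟨xm, h, hxmlt, ?_, hhx₀, fun t ht => hsolh t (hxm_solint ht), hxm0, ?_⟩
      · have h2 : e - δ ≤ xm := le_trans ht₁.1 hxm_mem.1
        rw [hedef] at h2
        nlinarith [hδ1, hTR]
      · intro t ht
        constructor
        · have := hmono (left_mem_Icc.2 (le_trans ht.1 ht.2)) ht ht.1
          dsimp at this
          rw [hxm0] at this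
          exact this
        · have := hmono ht (right_mem_Icc.2 (le_trans ht.1 ht.2)) ht.2
          dsimp at this
          rw [hhx₀] at this
          exact this
    -- slope upper bound on the extension
    have hlesh : ∀ t ∈ Icc (e - δ) x₀, (h t).2 ≤ s := by
      intro t ht
      have := slope_mono hx₀ hsolh ht (right_mem_Icc.2 (by linarith [ht.1, ht.2] : e - δ ≤ x₀)) ht.2
      dsimp at this
      rw [hhx₀] at this
      exact this
    have hint : x₀ - (T + δ) = e - δ := by rw [hedef]; ring
    refine ⟨by linarith, h, hhx₀, ?_, ?_⟩ <;> rw [hint] <;> intro t ht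
    · exact hsolh t ht
    · exact ⟨hposh t ht, hlesh t ht⟩
  -- conclusion
  have hne : B.Nonempty := ⟨0, base⟩
  have hbdd : BddAbove B := ⟨R, fun T hT => bddB T hT⟩
  have h1 : sSup B - δ < sSup B := by linarith
  obtain ⟨T, hTB, hTgt⟩ := exists_lt_of_lt_csSup hne h1
  have := le_csSup hbdd (step T hTB)
  linarith

end Painleve

namespace Painleve

/-- Time-reversed Grönwall comparison: two solutions close at the right end stay close. -/
lemma gronwall_cmp {f g : ℝ → ℝ × ℝ} {a b ρ : ℝ} (hρ : 0 ≤ ρ) (hab : a ≤ b)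
    (hf : ∀ t ∈ Icc a b, HasDerivAt f (pv t (f t)) t)
    (hg : ∀ t ∈ Icc a b, HasDerivAt g (pv t (g t)) t)
    (hfm : ∀ t ∈ Icc a b, f t ∈ Metric.closedBall (0 : ℝ × ℝ) (ρ + 1))
    (hgm : ∀ t ∈ Icc a b, g t ∈ Metric.closedBall (0 : ℝ × ℝ) (ρ + 1))
    {δ : ℝ} (hend : dist (f b) (g b) ≤ δ) :
    ∀ t ∈ Icc a b, dist (f t) (g t) ≤ δ * Real.exp ((12 * ρ + 13) * (b - a)) := by
  have hδ0 : 0 ≤ δ := le_trans dist_nonneg hend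
  set K : NNReal := ⟨12 * ρ + 13, by positivity⟩ with hKdef
  set v' : ℝ → ℝ × ℝ → ℝ × ℝ := fun τ p => -pv (-τ) p with hv'def
  have hmemneg : ∀ τ ∈ Icc (-b) (-a), -τ ∈ Icc a b := by
    intro τ hτ
    exact ⟨by linarith [hτ.2], by linarith [hτ.1]⟩
  have hlip : ∀ τ, LipschitzOnWith K (v' τ) (Metric.closedBall (0 : ℝ × ℝ) (ρ + 1)) := by
    intro τ
    apply LipschitzOnWith.of_dist_le_mul
    intro p hp q hq
    have h1 : dist (v' τ p) (v' τ q) = dist (pv (-τ) p) (pv (-τ) q) := dist_neg_neg _ _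
    rw [h1]
    exact (pv_lipschitz ρ hρ (-τ)).dist_le_mul p hp q hq
  have hder : ∀ (F : ℝ → ℝ × ℝ), (∀ t ∈ Icc a b, HasDerivAt F (pv t (F t)) t) →
      ∀ τ ∈ Ico (-b) (-a), HasDerivWithinAt (F ∘ Neg.neg) (v' τ ((F ∘ Neg.neg) τ)) (Ici τ) τ := by
    intro F hF τ hτ
    have hmem : -τ ∈ Icc a b := hmemneg τ ⟨hτ.1, hτ.2.le⟩
    have h1 := (hF (-τ) hmem).scomp τ (hasDerivAt_neg τ)
    have h2 : ((-1 : ℝ) • pv (-τ) (F (-τ))) = v' τ ((F ∘ Neg.neg) τ) := by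
      simp [hv'def, Function.comp]
    rw [h2] at h1
    exact h1.hasDerivWithinAt
  have hcont : ∀ (F : ℝ → ℝ × ℝ), (∀ t ∈ Icc a b, HasDerivAt F (pv t (F t)) t) →
      ContinuousOn (F ∘ Neg.neg) (Icc (-b) (-a)) := by
    intro F hF τ hτ
    have : ContinuousAt (F ∘ Neg.neg) τ := by
      apply ContinuousAt.comp
      · exact (hF (-τ) (hmemneg τ hτ)).continuousAt
      · exact continuous_neg.continuousAt
    exact this.continuousWithinAt
  have key := dist_le_of_trajectories_ODE_of_mem (v := v')
    (s := fun _ => Metric.closedBall (0 : ℝ × ℝ) (ρ + 1)) (K := K)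
    (fun τ _ => (hlip τ).mono (by rfl))
    (hcont f hf) (hder f hf)
    (fun τ hτ => hfm (-τ) (hmemneg τ ⟨hτ.1, hτ.2.le⟩))
    (hcont g hg) (hder g hg)
    (fun τ hτ => hgm (-τ) (hmemneg τ ⟨hτ.1, hτ.2.le⟩))
    (by simpa [Function.comp] using hend)
  intro t ht
  have h3 := key (-t) ⟨by linarith [ht.2], by linarith [ht.1]⟩
  simp only [Function.comp, neg_neg] at h3
  calc dist (f t) (g t) ≤ δ * Real.exp (K * (-t - -b)) := h3
    _ ≤ δ * Real.exp ((12 * ρ + 13) * (b - a)) := by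
        apply mul_le_mul_of_nonneg_left _ hδ0
        apply Real.exp_le_exp.2
        have hKc : (K : ℝ) = 12 * ρ + 13 := rfl
        rw [hKc]
        nlinarith [ht.1, ht.2]

end Painleve

namespace Painleve

variable (x₀ y₀ : ℝ)

noncomputable def pack (hx₀ : x₀ ≤ 0) (s : ℝ) : ℝ × (ℝ → ℝ × ℝ) :=
  if h : 0 < s then
    ⟨(backward x₀ y₀ hx₀ s h).choose, (backward x₀ y₀ hx₀ s h).choose_spec.choose⟩
  else ⟨0, fun _ => 0⟩

lemma pack_spec (hx₀ : x₀ ≤ 0) {s : ℝ} (hs : 0 < s) :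
    (pack x₀ y₀ hx₀ s).1 < x₀ ∧ x₀ - (Real.sqrt (2*s) + 1) ≤ (pack x₀ y₀ hx₀ s).1 ∧
      (pack x₀ y₀ hx₀ s).2 x₀ = (y₀, s) ∧
      (∀ t ∈ Icc (pack x₀ y₀ hx₀ s).1 x₀,
        HasDerivAt (pack x₀ y₀ hx₀ s).2 (pv t ((pack x₀ y₀ hx₀ s).2 t)) t) ∧
      ((pack x₀ y₀ hx₀ s).2 (pack x₀ y₀ hx₀ s).1).2 = 0 ∧
      (∀ t ∈ Icc (pack x₀ y₀ hx₀ s).1 x₀,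
        0 ≤ ((pack x₀ y₀ hx₀ s).2 t).2 ∧ ((pack x₀ y₀ hx₀ s).2 t).2 ≤ s) := by
  have h := (backward x₀ y₀ hx₀ s hs).choose_spec.choose_spec
  simp only [pack, dif_pos hs]
  exact h

/-- the minimum value reached by the shooting solution with slope `s` -/
noncomputable def msol (hx₀ : x₀ ≤ 0) (s : ℝ) : ℝ :=
  ((pack x₀ y₀ hx₀ s).2 (pack x₀ y₀ hx₀ s).1).1

lemma pack_y_bounds (hx₀ : x₀ ≤ 0) {s : ℝ} (hs : 0 < s) :
    ∀ t ∈ Icc (pack x₀ y₀ hx₀ s).1 x₀,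
      y₀ - s * (Real.sqrt (2*s) + 1) ≤ ((pack x₀ y₀ hx₀ s).2 t).1 ∧
      ((pack x₀ y₀ hx₀ s).2 t).1 ≤ y₀ := by
  obtain ⟨hlt, hge, hval, hsol, hzero, hslope⟩ := pack_spec x₀ y₀ hx₀ hs
  set xm := (pack x₀ y₀ hx₀ s).1
  set f := (pack x₀ y₀ hx₀ s).2
  intro t ht
  constructor
  · have h1 := y_lower hlt.le hsol (fun z hz => (hslope z hz).2) t ht
    rw [hval] at h1
    dsimp at h1
    have h2 : s * (x₀ - t) ≤ s * (Real.sqrt (2*s) + 1) := by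
      apply mul_le_mul_of_nonneg_left _ hs.le
      have := ht.1
      linarith [hge]
    linarith
  · have := y_mono hsol (fun z hz => (hslope z hz).1) ht (right_mem_Icc.2 hlt.le) ht.2
    dsimp at this
    rw [hval] at this
    exact this

lemma pack_in_ball (hx₀ : x₀ ≤ 0) {s s₁ : ℝ} (hs : 0 < s) (hss : s ≤ s₁) :
    ∀ t ∈ Icc (pack x₀ y₀ hx₀ s).1 x₀,
      (pack x₀ y₀ hx₀ s).2 t ∈ Metric.closedBall (0 : ℝ × ℝ)
        (|y₀| + s₁ * (Real.sqrt (2*s₁) + 1) + s₁) := by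
  obtain ⟨hlt, hge, hval, hsol, hzero, hslope⟩ := pack_spec x₀ y₀ hx₀ hs
  intro t ht
  obtain ⟨hy1, hy2⟩ := pack_y_bounds x₀ y₀ hx₀ hs t ht
  obtain ⟨hs1, hs2⟩ := hslope t ht
  have hs₁0 : 0 < s₁ := lt_of_lt_of_le hs hss
  have hsqrt : Real.sqrt (2*s) ≤ Real.sqrt (2*s₁) := Real.sqrt_le_sqrt (by linarith)
  have hsq0 : 0 ≤ Real.sqrt (2*s₁) := Real.sqrt_nonneg _
  rw [Metric.mem_closedBall, dist_zero_right, Prod.norm_def]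
  simp only [Real.norm_eq_abs]
  apply max_le
  · rw [abs_le]
    constructor
    · have : s * (Real.sqrt (2*s) + 1) ≤ s₁ * (Real.sqrt (2*s₁) + 1) := by
        apply mul_le_mul hss (by linarith) (by linarith [Real.sqrt_nonneg (2*s)]) hs₁0.le
      nlinarith [neg_abs_le y₀]
    · nlinarith [le_abs_self y₀, mul_nonneg hs₁0.le (by linarith : (0:ℝ) ≤ Real.sqrt (2*s₁) + 1)]
  · rw [abs_le]
    constructor <;> nlinarith [abs_nonneg y₀,
      mul_nonneg hs₁0.le (by linarith : (0:ℝ) ≤ Real.sqrt (2*s₁) + 1)]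

end Painleve

namespace Painleve

lemma slope_growth {f : ℝ → ℝ × ℝ} {a b c : ℝ} (hb : b ≤ 0)
    (hsol : ∀ t ∈ Icc a b, HasDerivAt f (pv t (f t)) t) (hc : c ≤ -b) :
    ∀ u ∈ Icc a b, ∀ v ∈ Icc a b, u ≤ v → c * (v - u) ≤ (f v).2 - (f u).2 := by
  intro u hu v hv huv
  have hmono : MonotoneOn (fun t => (f t).2 - c * t) (Icc a b) := by
    apply monoOn_of_hasDeriv (f' := fun t => (6 * (f t).1 ^ 2 - t) - c)
    · intro z hz
      exact (hasDerivAt_snd (hsol z hz)).sub (by simpa using (hasDerivAt_id z).const_mul c)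
    · intro z hz
      nlinarith [sq_nonneg (f z).1, hz.2]
  have := hmono hu hv huv
  dsimp at this
  nlinarith

lemma lipschitz_of_deriv_bound {f f' : ℝ → ℝ} {a b C : ℝ}
    (hd : ∀ t ∈ Icc a b, HasDerivAt f (f' t) t) (hC : ∀ t ∈ Icc a b, |f' t| ≤ C) :
    ∀ u ∈ Icc a b, ∀ v ∈ Icc a b, |f v - f u| ≤ C * |v - u| := by
  have key : ∀ u ∈ Icc a b, ∀ v ∈ Icc a b, u ≤ v → |f v - f u| ≤ C * (v - u) := by
    intro u hu v hv huv
    have hm1 : MonotoneOn (fun t => C * t - f t) (Icc a b) := by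
      apply monoOn_of_hasDeriv (f' := fun t => C - f' t)
      · intro z hz
        exact (by simpa using (hasDerivAt_id z).const_mul C : HasDerivAt (fun t => C * t) C z).sub
          (hd z hz)
      · intro z hz
        have := hC z (Ioo_subset_Icc_self hz)
        cases' abs_le.1 this with h1 h2
        linarith
    have hm2 : MonotoneOn (fun t => C * t + f t) (Icc a b) := by
      apply monoOn_of_hasDeriv (f' := fun t => C + f' t)
      · intro z hz
        exact (by simpa using (hasDerivAt_id z).const_mul C : HasDerivAt (fun t => C * t) C z).add
          (hd z hz)
      · intro z hz
        have := hC z (Ioo_subset_Icc_self hz)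
        cases' abs_le.1 this with h1 h2
        linarith
    have h1 := hm1 hu hv huv
    have h2 := hm2 hu hv huv
    dsimp at h1 h2
    rw [abs_le]
    constructor <;> linarith
  intro u hu v hv
  rcases le_total u v with h | h
  · rw [abs_of_nonneg (by linarith : (0:ℝ) ≤ v - u)]
    exact key u hu v hv h
  · rw [abs_of_nonpos (by linarith : v - u ≤ 0), ← abs_sub_comm]
    have := key v hv u hu h
    calc |f u - f v| ≤ C * (u - v) := this
      _ = C * -(v - u) := by ring
  
end Painleve

namespace Painleve

set_option maxHeartbeats 1000000 in
lemma msol_continuousAt (x₀ y₀ : ℝ) (hx₀ : x₀ ≤ 0) {s₀ : ℝ} (hs₀ : 0 < s₀) :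
    ContinuousAt (msol x₀ y₀ hx₀) s₀ := by
  obtain ⟨hlt₀, hge₀, hval₀, hsol₀, hzero₀, hslope₀⟩ := pack_spec x₀ y₀ hx₀ hs₀
  set xm₀ := (pack x₀ y₀ hx₀ s₀).1 with hxm₀def
  set f₀ := (pack x₀ y₀ hx₀ s₀).2 with hf₀def
  have hxm₀neg : xm₀ < 0 := lt_of_lt_of_le hlt₀ hx₀
  -- extension of the central solution beyond its minimum point
  set A₀ : ℝ := |xm₀| + |(f₀ xm₀).1| + |(f₀ xm₀).2| with hA₀def
  have hA₀ : 0 ≤ A₀ := by positivity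
  have hη₀pos := pδ_pos A₀ hA₀
  set η₀ := pδ A₀ with hη₀def
  obtain ⟨g₀, hg₀0, hg₀⟩ := local_exists A₀ hA₀ xm₀ (f₀ xm₀)
    (by rw [hA₀def]; nlinarith [abs_nonneg (f₀ xm₀).1, abs_nonneg (f₀ xm₀).2])
    (by rw [hA₀def]; nlinarith [abs_nonneg xm₀, abs_nonneg (f₀ xm₀).2])
    (by rw [hA₀def]; nlinarith [abs_nonneg xm₀, abs_nonneg (f₀ xm₀).1])
  obtain ⟨F₀, hsolF, hFf, hFg⟩ := glue_left (by linarith : xm₀ - η₀ ≤ xm₀) hlt₀.le hsol₀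
    (fun t ht => hg₀ t ⟨ht.1, by linarith [ht.2]⟩) hg₀0
  have hFx₀ : F₀ x₀ = (y₀, s₀) := by rw [hFf x₀ (right_mem_Icc.2 hlt₀.le), hval₀]
  have hFxm : F₀ xm₀ = f₀ xm₀ := hFf xm₀ (left_mem_Icc.2 hlt₀.le)
  have hFzero : (F₀ xm₀).2 = 0 := by rw [hFxm]; exact hzero₀
  have hdomF : Icc xm₀ x₀ ⊆ Icc (xm₀ - η₀) x₀ := Icc_subset_Icc (by linarith) le_rfl
  -- a bound for the extended central solution
  have hcontF : ContinuousOn F₀ (Icc (xm₀ - η₀) x₀) :=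
    fun t ht => (hsolF t ht).continuousAt.continuousWithinAt
  obtain ⟨C₀, hC₀bound⟩ := isCompact_Icc.exists_bound_of_continuousOn hcontF
  have hC₀0 : 0 ≤ C₀ := le_trans (norm_nonneg _)
    (hC₀bound x₀ (right_mem_Icc.2 (by linarith)))
  have hFcomp : ∀ t ∈ Icc (xm₀ - η₀) x₀, |(F₀ t).1| ≤ C₀ ∧ |(F₀ t).2| ≤ C₀ := by
    intro t ht
    have := hC₀bound t ht
    rw [Prod.norm_def] at this
    simp only [Real.norm_eq_abs] at this
    exact ⟨le_trans (le_max_left _ _) this, le_trans (le_max_right _ _) this⟩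
  -- ball radius for Gronwall
  set ρ : ℝ := max (|y₀| + (s₀+1) * (Real.sqrt (2*(s₀+1)) + 1) + (s₀+1)) C₀ with hρdef
  have hρ0 : 0 ≤ ρ := le_trans hC₀0 (le_max_right _ _)
  set Ecap : ℝ := Real.exp ((12 * ρ + 13) * (x₀ - (xm₀ - η₀))) with hEdef
  have hEpos : 0 < Ecap := Real.exp_pos _
  rw [Metric.continuousAt_iff]
  intro ε hε
  set η : ℝ := min η₀ (min (x₀ - xm₀) (min (-xm₀/2) (ε/(2*(C₀+1))))) with hηdef
  have hηpos : 0 < η := by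
    apply lt_min hη₀pos
    apply lt_min (by linarith)
    apply lt_min (by linarith)
    positivity
  have hη₁ : η ≤ η₀ := min_le_left _ _
  have hη₂ : η ≤ x₀ - xm₀ := le_trans (min_le_right _ _) (min_le_left _ _)
  have hη₃ : η ≤ -xm₀/2 := le_trans (min_le_right _ _) (le_trans (min_le_right _ _) (min_le_left _ _))
  have hη₄ : η ≤ ε/(2*(C₀+1)) :=
    le_trans (min_le_right _ _) (le_trans (min_le_right _ _) (min_le_right _ _))
  set γ : ℝ := (-xm₀/2) * η with hγdef
  have hγpos : 0 < γ := by
    apply mul_pos (by linarith) hηpos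
  set δp : ℝ := min 1 (min (s₀/2) (min (γ/(2*Ecap)) (ε/(4*Ecap)))) with hδpdef
  have hδppos : 0 < δp := by
    apply lt_min one_pos
    apply lt_min (by linarith)
    exact lt_min (div_pos hγpos (by linarith)) (div_pos hε (by linarith))
  refine ⟨δp, hδppos, ?_⟩
  intro s hds
  rw [Real.dist_eq] at hds
  have hδp0 : δp ≤ 1 := min_le_left _ _
  have hδp1 : δp ≤ s₀/2 := le_trans (min_le_right _ _) (min_le_left _ _)
  have hδp2 : δp ≤ γ/(2*Ecap) :=
    le_trans (min_le_right _ _) (le_trans (min_le_right _ _) (min_le_left _ _))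
  have hδp3 : δp ≤ ε/(4*Ecap) :=
    le_trans (min_le_right _ _) (le_trans (min_le_right _ _) (min_le_right _ _))
  have habs := abs_lt.1 hds
  have hspos : 0 < s := by linarith [habs.1]
  have hsle : s ≤ s₀ + 1 := by linarith [habs.2]
  obtain ⟨hlt_s, hge_s, hval_s, hsol_s, hzero_s, hslope_s⟩ := pack_spec x₀ y₀ hx₀ hspos
  set xms := (pack x₀ y₀ hx₀ s).1 with hxmsdef
  set fs := (pack x₀ y₀ hx₀ s).2 with hfsdef
  -- Db : the Gronwall bound
  have hDb : |s - s₀| * Ecap < δp * Ecap := by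
    apply mul_lt_mul_of_pos_right hds hEpos
  have hDbγ : δp * Ecap ≤ γ/2 := by
    rw [le_div_iff₀ (by linarith : (0:ℝ) < 2*Ecap)] at hδp2
    nlinarith
  have hDbε : δp * Ecap ≤ ε/4 := by
    rw [le_div_iff₀ (by linarith : (0:ℝ) < 4*Ecap)] at hδp3
    nlinarith
  -- ball membership
  have hballs : ∀ t ∈ Icc xms x₀, fs t ∈ Metric.closedBall (0 : ℝ × ℝ) (ρ + 1) := by
    intro t ht
    apply Metric.closedBall_subset_closedBall _ (pack_in_ball x₀ y₀ hx₀ hspos hsle t ht)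
    calc |y₀| + (s₀+1) * (Real.sqrt (2*(s₀+1)) + 1) + (s₀+1) ≤ ρ := le_max_left _ _
      _ ≤ ρ + 1 := by linarith
  have hballF : ∀ t ∈ Icc (xm₀ - η₀) x₀, F₀ t ∈ Metric.closedBall (0 : ℝ × ℝ) (ρ + 1) := by
    intro t ht
    rw [Metric.mem_closedBall, dist_zero_right]
    calc ‖F₀ t‖ ≤ C₀ := hC₀bound t ht
      _ ≤ ρ + 1 := by linarith [le_max_right (|y₀| + (s₀+1) * (Real.sqrt (2*(s₀+1)) + 1) + (s₀+1)) C₀]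
  -- generic Gronwall comparison
  have hGron : ∀ a, xm₀ - η₀ ≤ a → xms ≤ a → a ≤ x₀ →
      ∀ t ∈ Icc a x₀, dist (fs t) (F₀ t) ≤ |s - s₀| * Ecap := by
    intro a ha1 ha2 ha3 t ht
    have hend : dist (fs x₀) (F₀ x₀) ≤ |s - s₀| := by
      rw [hval_s, hFx₀, Prod.dist_eq]
      simp [Real.dist_eq]
    have h1 := gronwall_cmp hρ0 ha3
      (fun z hz => hsol_s z ⟨le_trans ha2 hz.1, hz.2⟩)
      (fun z hz => hsolF z ⟨le_trans ha1 hz.1, hz.2⟩)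
      (fun z hz => hballs z ⟨le_trans ha2 hz.1, hz.2⟩)
      (fun z hz => hballF z ⟨le_trans ha1 hz.1, hz.2⟩)
      hend t ht
    calc dist (fs t) (F₀ t) ≤ |s - s₀| * Real.exp ((12*ρ+13) * (x₀ - a)) := h1
      _ ≤ |s - s₀| * Ecap := by
          apply mul_le_mul_of_nonneg_left _ (abs_nonneg _)
          apply Real.exp_le_exp.2
          have hxa : x₀ - a ≤ x₀ - (xm₀ - η₀) := by linarith
          have h12 : (0:ℝ) ≤ 12*ρ+13 := by linarith
          exact mul_le_mul_of_nonneg_left hxa h12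
  -- slope of F₀ below xm₀
  have hbelow : (F₀ (xm₀ - η)).2 ≤ xm₀ * η := by
    have := slope_growth (a := xm₀ - η₀) (b := xm₀) hxm₀neg.le
      (fun t ht => hsolF t ⟨ht.1, le_trans ht.2 hlt₀.le⟩) (le_refl (-xm₀))
      (xm₀ - η) ⟨by linarith, by linarith⟩ xm₀ ⟨by linarith, le_rfl⟩ (by linarith)
    rw [hFzero] at this
    nlinarith
  -- slope of F₀ above xm₀ + η
  have habove : ∀ t, xm₀ + η ≤ t → t ≤ x₀ → γ ≤ (F₀ t).2 := by
    intro t h1t h2t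
    have hstep : -(xm₀ + η) * η ≤ (F₀ (xm₀ + η)).2 := by
      have := slope_growth (a := xm₀) (b := xm₀ + η) (by linarith [hη₃])
        (fun z hz => hsolF z ⟨by linarith [hz.1], by linarith [hz.2, hη₂]⟩) (le_refl _)
        xm₀ ⟨by linarith, by linarith⟩ (xm₀ + η) ⟨by linarith, le_rfl⟩ (by linarith)
      rw [hFzero] at this
      nlinarith
    have hmono := slope_mono hx₀ (fun z hz => hsolF z ⟨by linarith [hz.1, hη₁], hz.2⟩)
      (a := xm₀ + η) (b := x₀)
    have h2 := hmono ⟨le_rfl, by linarith [hη₂]⟩ ⟨h1t, h2t⟩ h1t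
    dsimp at h2
    have : γ ≤ -(xm₀ + η) * η := by
      rw [hγdef]
      nlinarith [hηpos.le, hη₃]
    linarith
  -- Claim 1 : xms is not too far left
  have hcl1 : xm₀ - η ≤ xms := by
    by_contra hcon
    push_neg at hcon
    have haux := hGron (xm₀ - η) (by linarith) hcon.le (by linarith)
      (xm₀ - η) (left_mem_Icc.2 (by linarith))
    have hs2 : 0 ≤ (fs (xm₀ - η)).2 :=
      (hslope_s (xm₀ - η) ⟨hcon.le, by linarith⟩).1
    have hd2 : |(fs (xm₀ - η)).2 - (F₀ (xm₀ - η)).2| ≤ dist (fs (xm₀ - η)) (F₀ (xm₀ - η)) := by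
      rw [Prod.dist_eq, Real.dist_eq, Real.dist_eq]
      exact le_max_right _ _
    have hneg : xm₀ * η < 0 := mul_neg_of_neg_of_pos hxm₀neg hηpos
    have : -xm₀ * η ≤ |(fs (xm₀ - η)).2 - (F₀ (xm₀ - η)).2| := by
      rw [abs_of_nonneg (by linarith)]
      linarith
    have hγ2 : γ ≤ -xm₀ * η := by
      rw [hγdef]
      exact mul_le_mul_of_nonneg_right (by linarith : -xm₀/2 ≤ -xm₀) hηpos.le
    linarith
  -- Claim 2 : xms is not too far right
  have hcl2 : xms ≤ xm₀ + η := by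
    by_contra hcon
    push_neg at hcon
    have haux := hGron xms (by linarith [hη₁, hηpos]) le_rfl hlt_s.le
      xms (left_mem_Icc.2 hlt_s.le)
    have hab := habove xms hcon.le hlt_s.le
    have hd2 : |(fs xms).2 - (F₀ xms).2| ≤ dist (fs xms) (F₀ xms) := by
      rw [Prod.dist_eq, Real.dist_eq, Real.dist_eq]
      exact le_max_right _ _
    rw [hzero_s] at hd2
    have : γ ≤ |0 - (F₀ xms).2| := by
      rw [abs_of_nonpos (by linarith)]
      linarith
    linarith
  -- final estimate
  have hxms_dom : xms ∈ Icc (xm₀ - η₀) x₀ := ⟨by linarith, hlt_s.le⟩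
  have haux := hGron xms (by linarith) le_rfl hlt_s.le xms (left_mem_Icc.2 hlt_s.le)
  have h1 : |(fs xms).1 - (F₀ xms).1| ≤ |s - s₀| * Ecap := by
    refine le_trans ?_ haux
    rw [Prod.dist_eq, Real.dist_eq, Real.dist_eq]
    exact le_max_left _ _
  have h2 : |(F₀ xms).1 - (F₀ xm₀).1| ≤ C₀ * η := by
    have hlip := lipschitz_of_deriv_bound (f' := fun t => (F₀ t).2)
      (fun t ht => hasDerivAt_fst (hsolF t ht)) (fun t ht => (hFcomp t ht).2)
      xm₀ (hdomF (left_mem_Icc.2 hlt₀.le)) xms hxms_dom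
    calc |(F₀ xms).1 - (F₀ xm₀).1| ≤ C₀ * |xms - xm₀| := hlip
      _ ≤ C₀ * η := by
          apply mul_le_mul_of_nonneg_left _ hC₀0
          rw [abs_le]
          constructor <;> linarith
  have hC₀η : C₀ * η < ε/2 := by
    have : C₀ * η ≤ C₀ * (ε/(2*(C₀+1))) := mul_le_mul_of_nonneg_left hη₄ hC₀0
    have h3 : C₀ * (ε/(2*(C₀+1))) < ε/2 := by
      rw [mul_div_assoc']
      rw [div_lt_div_iff₀ (by positivity) (by norm_num)]
      nlinarith
    linarith
  rw [Real.dist_eq]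
  have hmm : msol x₀ y₀ hx₀ s = (fs xms).1 := by
    rw [msol, ← hxmsdef, ← hfsdef]
  have hmm0 : msol x₀ y₀ hx₀ s₀ = (F₀ xm₀).1 := by
    rw [msol, ← hxm₀def, ← hf₀def, hFxm]
  rw [hmm, hmm0]
  calc |(fs xms).1 - (F₀ xm₀).1|
      ≤ |(fs xms).1 - (F₀ xms).1| + |(F₀ xms).1 - (F₀ xm₀).1| := abs_sub_le _ _ _
    _ < ε := by linarith [hDb, hDbε]

end Painleve

namespace Painleve

lemma msol_lower (x₀ y₀ : ℝ) (hx₀ : x₀ ≤ 0) {s : ℝ} (hs : 0 < s) :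
    y₀ - s * (Real.sqrt (2*s) + 1) ≤ msol x₀ y₀ hx₀ s := by
  obtain ⟨hlt, hge, hval, hsol, hzero, hslope⟩ := pack_spec x₀ y₀ hx₀ hs
  exact (pack_y_bounds x₀ y₀ hx₀ hs (pack x₀ y₀ hx₀ s).1 (left_mem_Icc.2 hlt.le)).1

lemma msol_big (x₀ y₀ y_l : ℝ) (hx₀ : x₀ ≤ 0) (hlt : y_l < y₀) :
    ∃ S : ℝ, 1 ≤ S ∧ msol x₀ y₀ hx₀ S < y_l := by
  set M : ℝ := max (|y_l|) (|y₀|) with hMdef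
  set Cst : ℝ := 6 * M ^ 2 + |x₀| + 1 with hCstdef
  have hM0 : 0 ≤ M := le_trans (abs_nonneg _) (le_max_left _ _)
  have hCst1 : 1 ≤ Cst := by rw [hCstdef]; nlinarith [abs_nonneg x₀]
  set S : ℝ := Cst + (y₀ - y_l) + 1 with hSdef
  have hS0 : 0 < S := by rw [hSdef]; nlinarith
  refine ⟨S, by rw [hSdef]; nlinarith, ?_⟩
  by_contra hcon
  push_neg at hcon
  obtain ⟨hlts, hges, hvals, hsols, hzeros, hslopes⟩ := pack_spec x₀ y₀ hx₀ hS0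
  set xm := (pack x₀ y₀ hx₀ S).1 with hxmdef
  set f := (pack x₀ y₀ hx₀ S).2 with hfdef
  -- `y ≥ y_l` on the interval (monotonicity), and `|y| ≤ M`
  have hymono := y_mono hsols (fun z hz => (hslopes z hz).1)
  have hylb : ∀ t ∈ Icc xm x₀, y_l ≤ (f t).1 := by
    intro t ht
    have := hymono (left_mem_Icc.2 hlts.le) ht ht.1
    dsimp at this
    exact le_trans hcon this
  have hyub : ∀ t ∈ Icc xm x₀, (f t).1 ≤ y₀ := by
    intro t ht
    have := hymono ht (right_mem_Icc.2 hlts.le) ht.2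
    dsimp at this
    rwa [hvals] at this
  have hyM : ∀ t ∈ Icc xm x₀, |(f t).1| ≤ M := by
    intro t ht
    rw [abs_le]
    constructor
    · linarith [hylb t ht, neg_abs_le y_l, le_max_left (|y_l|) (|y₀|)]
    · linarith [hyub t ht, le_abs_self y₀, le_max_right (|y_l|) (|y₀|)]
  -- slope lower bound on `[a, x₀]` for `a ≥ max xm (x₀ - 1)`
  have hPmono : ∀ a, xm ≤ a → x₀ - 1 ≤ a →
      MonotoneOn (fun t => Cst * t - (f t).2) (Icc a x₀) := by
    intro a ha1 ha2
    apply monoOn_of_hasDeriv (f' := fun t => Cst - (6 * (f t).1 ^ 2 - t))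
    · intro z hz
      exact (by simpa using (hasDerivAt_id z).const_mul Cst : HasDerivAt (fun t => Cst * t) Cst z).sub
        (hasDerivAt_snd (hsols z ⟨le_trans ha1 hz.1, hz.2⟩))
    · intro z hz
      have h1 := hyM z ⟨le_trans ha1 hz.1.le, hz.2.le⟩
      have h2 : (f z).1 ^ 2 ≤ M ^ 2 := by nlinarith [abs_nonneg (f z).1, sq_abs (f z).1]
      have h3 : -z ≤ |x₀| + 1 := by
        have := hz.1
        have := neg_abs_le x₀
        linarith
      rw [hCstdef]
      nlinarith
  rcases le_or_gt (x₀ - 1) xm with hcase | hcase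
  · -- the minimum is close: slope estimate at xm gives a contradiction
    have := hPmono xm le_rfl hcase (left_mem_Icc.2 hlts.le) (right_mem_Icc.2 hlts.le) hlts.le
    dsimp at this
    rw [hzeros, hvals] at this
    dsimp at this
    have hx1 : x₀ - xm ≤ 1 := by linarith
    nlinarith [hlts.le]
  · -- the solution dives below `y_l` already at `x₀ - 1`
    have hsub : Icc (x₀ - 1) x₀ ⊆ Icc xm x₀ := Icc_subset_Icc hcase.le le_rfl
    have hslb : ∀ t ∈ Icc (x₀ - 1) x₀, S - Cst ≤ (f t).2 := by
      intro t ht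
      have := hPmono (x₀ - 1) hcase.le le_rfl ht (right_mem_Icc.2 (by linarith)) ht.2
      dsimp at this
      rw [hvals] at this
      dsimp at this
      have h1 : Cst * (x₀ - t) ≤ Cst := by nlinarith [ht.1, ht.2]
      nlinarith
    have hQmono : MonotoneOn (fun t => (f t).1 - (S - Cst) * t) (Icc (x₀ - 1) x₀) := by
      apply monoOn_of_hasDeriv (f' := fun t => (f t).2 - (S - Cst))
      · intro z hz
        exact (hasDerivAt_fst (hsols z (hsub hz))).sub
          (by simpa using (hasDerivAt_id z).const_mul (S - Cst))
      · intro z hz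
        have := hslb z (Ioo_subset_Icc_self hz)
        linarith
    have := hQmono (left_mem_Icc.2 (by linarith)) (right_mem_Icc.2 (by linarith)) (by linarith)
    dsimp at this
    rw [hvals] at this
    dsimp at this
    have hyl := hylb (x₀ - 1) (hsub (left_mem_Icc.2 (by linarith)))
    have hSC : S - Cst = y₀ - y_l + 1 := by rw [hSdef]; ring
    nlinarith

end Painleve

open Painleve in
/-- Given `x₀ ≤ 0` and `y₀ > y_l`, there is exactly one solution of
`y'' = 6y² - x` with `y(x₀) = y₀` whose minimum value, attained at some
`x_min < x₀`, equals `y_l`.  Uniqueness is expressed via the initial slope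
at `x₀`: any two such solutions have the same slope at `x₀`. -/
theorem painleveI_level_parametrization_exists_unique
    (x₀ y₀ y_l : ℝ) (hx₀ : x₀ ≤ 0) (hlt : y_l < y₀) :
    (∃ (x_min : ℝ) (y y' : ℝ → ℝ), x_min < x₀ ∧
      (∀ x ∈ Set.Icc x_min x₀,
        HasDerivAt y (y' x) x ∧ HasDerivAt y' (6 * (y x) ^ 2 - x) x) ∧
      y x₀ = y₀ ∧ y x_min = y_l ∧ y' x_min = 0 ∧
      (∀ x ∈ Set.Icc x_min x₀, y_l ≤ y x)) ∧
    (∀ (xm₁ xm₂ : ℝ) (y₁ y₁' y₂ y₂' : ℝ → ℝ),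
      (xm₁ < x₀ ∧
        (∀ x ∈ Set.Icc xm₁ x₀,
          HasDerivAt y₁ (y₁' x) x ∧ HasDerivAt y₁' (6 * (y₁ x) ^ 2 - x) x) ∧
        y₁ x₀ = y₀ ∧ y₁ xm₁ = y_l ∧ y₁' xm₁ = 0 ∧
        (∀ x ∈ Set.Icc xm₁ x₀, y_l ≤ y₁ x)) →
      (xm₂ < x₀ ∧
        (∀ x ∈ Set.Icc xm₂ x₀,
          HasDerivAt y₂ (y₂' x) x ∧ HasDerivAt y₂' (6 * (y₂ x) ^ 2 - x) x) ∧
        y₂ x₀ = y₀ ∧ y₂ xm₂ = y_l ∧ y₂' xm₂ = 0 ∧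
        (∀ x ∈ Set.Icc xm₂ x₀, y_l ≤ y₂ x)) →
      y₁' x₀ = y₂' x₀) := by
  constructor
  · -- existence via shooting
    obtain ⟨S, hS1, hSbig⟩ := msol_big x₀ y₀ y_l hx₀ hlt
    set s₁ : ℝ := min (1/2) ((y₀ - y_l)/3) with hs₁def
    have hs₁pos : 0 < s₁ := lt_min (by norm_num) (by linarith)
    have hs₁le : s₁ ≤ 1/2 := min_le_left _ _
    have hs₁le2 : s₁ ≤ (y₀ - y_l)/3 := min_le_right _ _
    have hsmall : y_l < msol x₀ y₀ hx₀ s₁ := by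
      have h1 := msol_lower x₀ y₀ hx₀ hs₁pos
      have hsq : Real.sqrt (2*s₁) ≤ 1 := by
        rw [show (1:ℝ) = Real.sqrt 1 from Real.sqrt_one.symm]
        exact Real.sqrt_le_sqrt (by linarith)
      have h2 : s₁ * (Real.sqrt (2*s₁) + 1) ≤ 2*s₁ := by nlinarith [Real.sqrt_nonneg (2*s₁)]
      nlinarith
    have hs₁S : s₁ ≤ S := by linarith
    have hcont : ContinuousOn (fun s => msol x₀ y₀ hx₀ s) (Icc s₁ S) :=
      fun s hs => (msol_continuousAt x₀ y₀ hx₀ (lt_of_lt_of_le hs₁pos hs.1)).continuousWithinAt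
    have hy_l_mem : y_l ∈ Icc (msol x₀ y₀ hx₀ S) (msol x₀ y₀ hx₀ s₁) := ⟨hSbig.le, hsmall.le⟩
    obtain ⟨sst, hsst_mem, hsst_eq⟩ := intermediate_value_Icc' hs₁S hcont hy_l_mem
    have hsstpos : 0 < sst := lt_of_lt_of_le hs₁pos hsst_mem.1
    obtain ⟨hlt_s, hge_s, hval_s, hsol_s, hzero_s, hslope_s⟩ := pack_spec x₀ y₀ hx₀ hsstpos
    set xm := (pack x₀ y₀ hx₀ sst).1 with hxmdef
    set f := (pack x₀ y₀ hx₀ sst).2 with hfdef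
    have hmse : (f xm).1 = y_l := by
      have : msol x₀ y₀ hx₀ sst = (f xm).1 := by rw [msol, ← hxmdef, ← hfdef]
      rw [← this]
      exact hsst_eq
    refine ⟨xm, fun x => (f x).1, fun x => (f x).2, hlt_s, ?_, ?_, hmse, hzero_s, ?_⟩
    · intro x hx
      exact ⟨hasDerivAt_fst (hsol_s x hx), hasDerivAt_snd (hsol_s x hx)⟩
    · show (f x₀).1 = y₀
      rw [hval_s]
    · intro x hx
      have hymono := y_mono hsol_s (fun z hz => (hslope_s z hz).1)
      have := hymono (left_mem_Icc.2 hlt_s.le) hx hx.1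
      dsimp at this
      rw [hmse] at this
      exact this
  · -- uniqueness via the inverse-function comparison
    rintro xm₁ xm₂ y₁ y₁' y₂ y₂' ⟨h1a, h1b, h1c, h1d, h1e, h1f⟩ ⟨h2a, h2b, h2c, h2d, h2e, h2f⟩
    exact slope_unique hx₀ hlt ⟨xm₁, y₁, y₁', h1a, h1b, h1c, h1d, h1e, h1f⟩
      ⟨xm₂, y₂, y₂', h2a, h2b, h2c, h2d, h2e, h2f⟩
end

section
/- Let y₁, y₂ be real solutions of y'' = 6y² − x both having a pole at x₀ with intervals of existence to the left of x₀, with Laurent parameters c₁ > c₂ (the coefficients of (x − x₀)⁴). Then in some left neighbourhood of x₀: y₁(x) > y₂(x) and 0 < y'₁(x) < y'₂(x); moreover the minimum values satisfy y₁,min > y₂,min. -/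
open Filter Set Topology

/-- Derivative of a Painlevé I solution is strictly monotone on `Ioo a x₀` when `x₀ ≤ 0`. -/
lemma painleveI_aux_dmono {a x₀ : ℝ} (hx₀ : x₀ ≤ 0) {y y' : ℝ → ℝ}
    (h : ∀ x ∈ Set.Ioo a x₀, HasDerivAt y (y' x) x ∧ HasDerivAt y' (6 * (y x) ^ 2 - x) x) :
    StrictMonoOn y' (Set.Ioo a x₀) := by
  apply strictMonoOn_of_deriv_pos (convex_Ioo a x₀)
  · exact fun x hx => ((h x hx).2.continuousAt).continuousWithinAt
  · intro x hx
    rw [interior_Ioo] at hx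
    rw [(h x hx).2.deriv]
    nlinarith [sq_nonneg (y x), hx.2, hx₀]

lemma painleveI_aux_derivzero {a x₀ : ℝ} {y y' : ℝ → ℝ}
    (h : ∀ x ∈ Set.Ioo a x₀, HasDerivAt y (y' x) x ∧ HasDerivAt y' (6 * (y x) ^ 2 - x) x)
    {xm : ℝ} (hxm : xm ∈ Set.Ioo a x₀) (hmin : IsMinOn y (Set.Ioo a x₀) xm) : y' xm = 0 :=
  (hmin.isLocalMin (isOpen_Ioo.mem_nhds hxm)).hasDerivAt_eq_zero (h xm hxm).1

lemma painleveI_aux_ypos {a x₀ : ℝ} (hx₀ : x₀ ≤ 0) {y y' : ℝ → ℝ}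
    (h : ∀ x ∈ Set.Ioo a x₀, HasDerivAt y (y' x) x ∧ HasDerivAt y' (6 * (y x) ^ 2 - x) x)
    {xm : ℝ} (hxm : xm ∈ Set.Ioo a x₀) (hmin : IsMinOn y (Set.Ioo a x₀) xm) :
    ∀ x ∈ Set.Ioo xm x₀, 0 < y' x := by
  intro x hx
  have h0 := painleveI_aux_derivzero h hxm hmin
  have hmem : x ∈ Set.Ioo a x₀ := ⟨hxm.1.trans hx.1, hx.2⟩
  have := painleveI_aux_dmono hx₀ h hxm hmem hx.1
  linarith

lemma painleveI_aux_ymono {a x₀ : ℝ} (hx₀ : x₀ ≤ 0) {y y' : ℝ → ℝ}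
    (h : ∀ x ∈ Set.Ioo a x₀, HasDerivAt y (y' x) x ∧ HasDerivAt y' (6 * (y x) ^ 2 - x) x)
    {xm : ℝ} (hxm : xm ∈ Set.Ioo a x₀) (hmin : IsMinOn y (Set.Ioo a x₀) xm) :
    StrictMonoOn y (Set.Ico xm x₀) := by
  have hsub : Set.Ico xm x₀ ⊆ Set.Ioo a x₀ := fun z hz => ⟨lt_of_lt_of_le hxm.1 hz.1, hz.2⟩
  apply strictMonoOn_of_deriv_pos (convex_Ico xm x₀)
  · exact fun x hx => ((h x (hsub hx)).1.continuousAt).continuousWithinAt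
  · intro x hx
    rw [interior_Ico] at hx
    rw [(h x (hsub (Set.Ioo_subset_Ico_self hx))).1.deriv]
    exact painleveI_aux_ypos hx₀ h hxm hmin x hx

lemma painleveI_aux_surj {a x₀ : ℝ} {y y' : ℝ → ℝ}
    (h : ∀ x ∈ Set.Ioo a x₀, HasDerivAt y (y' x) x ∧ HasDerivAt y' (6 * (y x) ^ 2 - x) x)
    (hpole : Tendsto y (𝓝[<] x₀) atTop)
    {xm : ℝ} (hxm : xm ∈ Set.Ioo a x₀) :
    ∀ v, y xm < v → ∃ x, x ∈ Set.Ioo xm x₀ ∧ y x = v := by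
  intro v hv
  have hmemIoo : ∀ᶠ x in 𝓝[<] x₀, x ∈ Set.Ioo xm x₀ :=
    Filter.eventually_iff.mpr (Ioo_mem_nhdsLT hxm.2)
  obtain ⟨xb, hyb, hxb⟩ := ((hpole.eventually_gt_atTop v).and hmemIoo).exists
  have hcont : ContinuousOn y (Set.Icc xm xb) := by
    intro z hz
    have hzmem : z ∈ Set.Ioo a x₀ := ⟨lt_of_lt_of_le hxm.1 hz.1, lt_of_le_of_lt hz.2 hxb.2⟩
    exact ((h z hzmem).1.continuousAt).continuousWithinAt
  have hIVT := intermediate_value_Ioo (le_of_lt hxb.1) hcont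
  obtain ⟨x, hx, hyx⟩ := hIVT ⟨hv, hyb⟩
  exact ⟨x, ⟨hx.1, hx.2.trans hxb.2⟩, hyx⟩

/-- Two solutions of `y'' = 6y² - x` with a pole at `x₀ ≤ 0`, intervals of
existence to the left of `x₀`, and Laurent parameters `c₁ > c₂`, satisfy
`y₁ > y₂` and `0 < y₁' < y₂'` in some left neighbourhood of `x₀`, and their
minimum values satisfy `y₁,min > y₂,min`. -/
theorem painleveI_laurent_parameter_monotone
    (x₀ a₁ a₂ c₁ c₂ : ℝ) (hx₀ : x₀ ≤ 0) (ha₁ : a₁ < x₀) (ha₂ : a₂ < x₀)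
    (y₁ y₁' y₂ y₂' : ℝ → ℝ)
    (h₁ : ∀ x ∈ Set.Ioo a₁ x₀,
      HasDerivAt y₁ (y₁' x) x ∧ HasDerivAt y₁' (6 * (y₁ x) ^ 2 - x) x)
    (h₂ : ∀ x ∈ Set.Ioo a₂ x₀,
      HasDerivAt y₂ (y₂' x) x ∧ HasDerivAt y₂' (6 * (y₂ x) ^ 2 - x) x)
    (hblow₁ : Tendsto y₁ (𝓝[>] a₁) atTop)
    (hblow₂ : Tendsto y₂ (𝓝[>] a₂) atTop)
    (hpole₁ : Tendsto y₁ (𝓝[<] x₀) atTop)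
    (hpole₂ : Tendsto y₂ (𝓝[<] x₀) atTop)
    (hc₁ : Tendsto (fun x : ℝ =>
        (y₁ x - 1 / (x - x₀) ^ 2 - (x₀ / 10) * (x - x₀) ^ 2
          - (1 / 6) * (x - x₀) ^ 3) / (x - x₀) ^ 4) (𝓝[<] x₀) (𝓝 c₁))
    (hc₂ : Tendsto (fun x : ℝ =>
        (y₂ x - 1 / (x - x₀) ^ 2 - (x₀ / 10) * (x - x₀) ^ 2
          - (1 / 6) * (x - x₀) ^ 3) / (x - x₀) ^ 4) (𝓝[<] x₀) (𝓝 c₂))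
    (hc : c₂ < c₁) :
    (∃ δ > 0, ∀ x ∈ Set.Ioo (x₀ - δ) x₀,
      y₂ x < y₁ x ∧ 0 < y₁' x ∧ y₁' x < y₂' x) ∧
    (∀ xm₁ ∈ Set.Ioo a₁ x₀, ∀ xm₂ ∈ Set.Ioo a₂ x₀,
      IsMinOn y₁ (Set.Ioo a₁ x₀) xm₁ → IsMinOn y₂ (Set.Ioo a₂ x₀) xm₂ →
      y₂ xm₂ < y₁ xm₁) := by
  ---------------------------------------------------------------- PART A
  have hquot : Tendsto (fun x => (y₁ x - y₂ x) / (x - x₀) ^ 4) (𝓝[<] x₀) (𝓝 (c₁ - c₂)) :=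
    (hc₁.sub hc₂).congr fun x => by ring
  have hApos : ∀ᶠ x in 𝓝[<] x₀, 0 < (y₁ x - y₂ x) / (x - x₀) ^ 4 :=
    hquot.eventually (eventually_gt_nhds (by linarith))
  have hltx₀ : ∀ᶠ x in 𝓝[<] x₀, x < x₀ := eventually_mem_nhdsWithin
  have hd_pos : ∀ᶠ x in 𝓝[<] x₀, 0 < y₁ x - y₂ x := by
    filter_upwards [hApos, hltx₀] with x hx1 hx2
    have hne : x - x₀ ≠ 0 := sub_ne_zero.mpr (ne_of_lt hx2)
    have ht : (0 : ℝ) < (x - x₀) ^ 4 :=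
      lt_of_le_of_ne (by positivity) (Ne.symm (pow_ne_zero _ hne))
    rcases div_pos_iff.mp hx1 with ⟨h, _⟩ | ⟨_, h⟩
    · exact h
    · linarith
  have hmono₁' : StrictMonoOn y₁' (Set.Ioo a₁ x₀) := painleveI_aux_dmono hx₀ h₁
  have hmono₂' : StrictMonoOn y₂' (Set.Ioo a₂ x₀) := painleveI_aux_dmono hx₀ h₂
  -- A2 : y₁' eventually positive
  have hA2 : ∀ᶠ x in 𝓝[<] x₀, 0 < y₁' x := by
    have hxa1 : a₁ < (a₁ + x₀) / 2 := by linarith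
    have hxa2 : (a₁ + x₀) / 2 < x₀ := by linarith
    have hmemIoo : ∀ᶠ x in 𝓝[<] x₀, x ∈ Set.Ioo ((a₁ + x₀) / 2) x₀ :=
      Filter.eventually_iff.mpr (Ioo_mem_nhdsLT hxa2)
    obtain ⟨xb, hyb, hxb⟩ :=
      ((hpole₁.eventually_gt_atTop (y₁ ((a₁ + x₀) / 2))).and hmemIoo).exists
    have hslope := exists_hasDerivAt_eq_slope y₁ y₁' hxb.1
      (fun z hz => ((h₁ z ⟨lt_of_lt_of_le hxa1 hz.1, lt_of_le_of_lt hz.2 hxb.2⟩).1.continuousAt).continuousWithinAt)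
      (fun z hz => (h₁ z ⟨hxa1.trans hz.1, hz.2.trans hxb.2⟩).1)
    obtain ⟨ξ, hξ, hξeq⟩ := hslope
    have hξpos : 0 < y₁' ξ := by
      rw [hξeq]; apply div_pos <;> linarith [hxb.1, hξ.1, hξ.2]
    have hξmem : ξ ∈ Set.Ioo a₁ x₀ := ⟨hxa1.trans hξ.1, hξ.2.trans hxb.2⟩
    have hmem2 : ∀ᶠ x in 𝓝[<] x₀, x ∈ Set.Ioo ξ x₀ :=
      Filter.eventually_iff.mpr (Ioo_mem_nhdsLT hξmem.2)
    filter_upwards [hmem2] with x hx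
    have hxmem : x ∈ Set.Ioo a₁ x₀ := ⟨hξmem.1.trans hx.1, hx.2⟩
    have := hmono₁' hξmem hxmem hx.1
    linarith
  -- tendsto of the difference to 0
  have hd0 : Tendsto (fun x => y₁ x - y₂ x) (𝓝[<] x₀) (𝓝 0) := by
    have ht : Tendsto (fun x : ℝ => x - x₀) (𝓝[<] x₀) (𝓝 0) := by
      have := (continuous_id.sub (continuous_const (y := x₀))).tendsto x₀
      simp only [Pi.sub_apply, id_eq, sub_self] at this
      exact this.mono_left nhdsWithin_le_nhds
    have ht4 : Tendsto (fun x : ℝ => (x - x₀) ^ 4) (𝓝[<] x₀) (𝓝 0) := by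
      have := ht.pow 4
      simpa using this
    have hmul := hquot.mul ht4
    rw [mul_zero] at hmul
    apply hmul.congr'
    filter_upwards [hltx₀] with x hx
    have hne : x - x₀ ≠ 0 := sub_ne_zero.mpr (ne_of_lt hx)
    field_simp
  -- A3 : on a suitable interval, y₁' < y₂'
  have hsum : ∀ᶠ x in 𝓝[<] x₀, 0 < y₁ x + y₂ x := by
    filter_upwards [hpole₁.eventually_gt_atTop 0, hpole₂.eventually_gt_atTop 0] with x u v
    linarith
  have hdomm : ∀ᶠ x in 𝓝[<] x₀, x ∈ Set.Ioo a₁ x₀ ∧ x ∈ Set.Ioo a₂ x₀ := by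
    have : ∀ᶠ x in 𝓝[<] x₀, x ∈ Set.Ioo (max a₁ a₂) x₀ :=
      Filter.eventually_iff.mpr (Ioo_mem_nhdsLT (max_lt ha₁ ha₂))
    filter_upwards [this] with x hx
    exact ⟨⟨lt_of_le_of_lt (le_max_left _ _) hx.1, hx.2⟩,
      ⟨lt_of_le_of_lt (le_max_right _ _) hx.1, hx.2⟩⟩
  have hevb := hd_pos.and (hsum.and hdomm)
  rw [Filter.eventually_iff, mem_nhdsLT_iff_exists_Ioo_subset] at hevb
  obtain ⟨b, hb, hbsub⟩ := hevb
  have hbx₀ : b < x₀ := hb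
  have hd'mono : StrictMonoOn (fun x => y₁' x - y₂' x) (Set.Ioo b x₀) := by
    apply strictMonoOn_of_deriv_pos (convex_Ioo b x₀)
    · intro x hx
      have hP := hbsub hx
      simp only [Set.mem_setOf_eq] at hP
      exact (((h₁ x hP.2.2.1).2.sub (h₂ x hP.2.2.2).2).continuousAt).continuousWithinAt
    · intro x hx
      rw [interior_Ioo] at hx
      have hP := hbsub hx
      simp only [Set.mem_setOf_eq] at hP
      rw [HasDerivAt.deriv (f := fun x => y₁' x - y₂' x) ((h₁ x hP.2.2.1).2.sub (h₂ x hP.2.2.2).2)]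
      nlinarith [mul_pos hP.1 hP.2.1]
  have hA3 : ∀ x ∈ Set.Ioo b x₀, y₁' x < y₂' x := by
    by_contra hcon
    push_neg at hcon
    obtain ⟨ξ, hξ, hξge⟩ := hcon
    set ξ' : ℝ := (ξ + x₀) / 2 with hξ'def
    have hξ'1 : ξ < ξ' := by rw [hξ'def]; rcases hξ with ⟨_, h2⟩; linarith
    have hξ'2 : ξ' < x₀ := by rw [hξ'def]; rcases hξ with ⟨_, h2⟩; linarith
    have hξ'mem : ξ' ∈ Set.Ioo b x₀ := ⟨hξ.1.trans hξ'1, hξ'2⟩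
    have hdmono : StrictMonoOn (fun x => y₁ x - y₂ x) (Set.Ico ξ' x₀) := by
      apply strictMonoOn_of_deriv_pos (convex_Ico ξ' x₀)
      · intro x hx
        have hxb : x ∈ Set.Ioo b x₀ := ⟨lt_of_lt_of_le hξ'mem.1 hx.1, hx.2⟩
        have hP := hbsub hxb
        simp only [Set.mem_setOf_eq] at hP
        exact (((h₁ x hP.2.2.1).1.sub (h₂ x hP.2.2.2).1).continuousAt).continuousWithinAt
      · intro x hx
        rw [interior_Ico] at hx
        have hxb : x ∈ Set.Ioo b x₀ := ⟨hξ'mem.1.trans hx.1, hx.2⟩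
        have hP := hbsub hxb
        simp only [Set.mem_setOf_eq] at hP
        rw [HasDerivAt.deriv (f := fun x => y₁ x - y₂ x) ((h₁ x hP.2.2.1).1.sub (h₂ x hP.2.2.2).1)]
        have := hd'mono hξ hxb (hξ'1.trans hx.1)
        simp only at this
        linarith
    have hPξ' := hbsub hξ'mem
    simp only [Set.mem_setOf_eq] at hPξ'
    have hc0 : 0 < y₁ ξ' - y₂ ξ' := hPξ'.1
    have hmemz : ∀ᶠ x in 𝓝[<] x₀, x ∈ Set.Ioo ξ' x₀ :=
      Filter.eventually_iff.mpr (Ioo_mem_nhdsLT hξ'2)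
    obtain ⟨z, hz1, hz2⟩ := ((hd0.eventually (eventually_lt_nhds hc0)).and hmemz).exists
    have := hdmono (Set.left_mem_Ico.mpr hξ'2) (Set.Ioo_subset_Ico_self hz2) hz2.1
    simp only at this
    linarith
  -- assemble part A as an eventual statement
  have hbev : ∀ᶠ x in 𝓝[<] x₀, x ∈ Set.Ioo b x₀ :=
    Filter.eventually_iff.mpr (Ioo_mem_nhdsLT hbx₀)
  have hAev : ∀ᶠ x in 𝓝[<] x₀, y₂ x < y₁ x ∧ 0 < y₁' x ∧ y₁' x < y₂' x := by
    filter_upwards [hd_pos, hA2, hbev] with x hx1 hx2 hx3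
    exact ⟨by linarith, hx2, hA3 x hx3⟩
  rw [Filter.eventually_iff, mem_nhdsLT_iff_exists_Ioo_subset] at hAev
  obtain ⟨l, hl, hlsub⟩ := hAev
  have hlx₀ : l < x₀ := hl
  constructor
  · exact ⟨x₀ - l, sub_pos.mpr hlx₀, fun x hx => hlsub (by rwa [sub_sub_cancel] at hx)⟩
  ---------------------------------------------------------------- PART B
  intro xm₁ hxm₁ xm₂ hxm₂ hmin₁ hmin₂
  by_contra hcon
  push_neg at hcon
  -- hcon : y₁ xm₁ ≤ y₂ xm₂
  have hzero₁ : y₁' xm₁ = 0 := painleveI_aux_derivzero h₁ hxm₁ hmin₁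
  have hzero₂ : y₂' xm₂ = 0 := painleveI_aux_derivzero h₂ hxm₂ hmin₂
  have hypos₁ := painleveI_aux_ypos hx₀ h₁ hxm₁ hmin₁
  have hypos₂ := painleveI_aux_ypos hx₀ h₂ hxm₂ hmin₂
  have hymono₁ := painleveI_aux_ymono hx₀ h₁ hxm₁ hmin₁
  have hymono₂ := painleveI_aux_ymono hx₀ h₂ hxm₂ hmin₂
  have hsurj₁ := painleveI_aux_surj h₁ hpole₁ hxm₁
  have hsurj₂ := painleveI_aux_surj h₂ hpole₂ hxm₂
  have hsub₁ : Set.Ioo xm₁ x₀ ⊆ Set.Ioo a₁ x₀ := fun z hz => ⟨hxm₁.1.trans hz.1, hz.2⟩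
  have hsub₂ : Set.Ioo xm₂ x₀ ⊆ Set.Ioo a₂ x₀ := fun z hz => ⟨hxm₂.1.trans hz.1, hz.2⟩
  have hIco₁ : Set.Ioo xm₁ x₀ ⊆ Set.Ico xm₁ x₀ := Set.Ioo_subset_Ico_self
  have hIco₂ : Set.Ioo xm₂ x₀ ⊆ Set.Ico xm₂ x₀ := Set.Ioo_subset_Ico_self
  have hm₁Ico : xm₁ ∈ Set.Ico xm₁ x₀ := ⟨le_refl _, hxm₁.2⟩
  have hm₂Ico : xm₂ ∈ Set.Ico xm₂ x₀ := ⟨le_refl _, hxm₂.2⟩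
  -- inverse functions of the increasing branches
  have hgex₁ : ∃ g : ℝ → ℝ, ∀ v, y₁ xm₁ < v → g v ∈ Set.Ioo xm₁ x₀ ∧ y₁ (g v) = v := by
    refine ⟨fun v => if hv : y₁ xm₁ < v then (hsurj₁ v hv).choose else xm₁, fun v hv => ?_⟩
    simp only [dif_pos hv]
    exact (hsurj₁ v hv).choose_spec
  have hgex₂ : ∃ g : ℝ → ℝ, ∀ v, y₂ xm₂ < v → g v ∈ Set.Ioo xm₂ x₀ ∧ y₂ (g v) = v := by
    refine ⟨fun v => if hv : y₂ xm₂ < v then (hsurj₂ v hv).choose else xm₂, fun v hv => ?_⟩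
    simp only [dif_pos hv]
    exact (hsurj₂ v hv).choose_spec
  obtain ⟨g₁, hg₁⟩ := hgex₁
  obtain ⟨g₂, hg₂⟩ := hgex₂
  have huniq₁ : ∀ v x, y₁ xm₁ < v → x ∈ Set.Ico xm₁ x₀ → y₁ x = v → x = g₁ v := by
    intro v x hv hx hyx
    exact hymono₁.injOn hx (hIco₁ (hg₁ v hv).1) (by rw [hyx, (hg₁ v hv).2])
  have huniq₂ : ∀ v x, y₂ xm₂ < v → x ∈ Set.Ico xm₂ x₀ → y₂ x = v → x = g₂ v := by
    intro v x hv hx hyx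
    exact hymono₂.injOn hx (hIco₂ (hg₂ v hv).1) (by rw [hyx, (hg₂ v hv).2])
  have hgmono₁ : StrictMonoOn g₁ (Set.Ioi (y₁ xm₁)) := by
    intro v hv w hw hvw
    refine (hymono₁.lt_iff_lt (hIco₁ (hg₁ v hv).1) (hIco₁ (hg₁ w hw).1)).mp ?_
    rw [(hg₁ v hv).2, (hg₁ w hw).2]; exact hvw
  have hgmono₂ : StrictMonoOn g₂ (Set.Ioi (y₂ xm₂)) := by
    intro v hv w hw hvw
    refine (hymono₂.lt_iff_lt (hIco₂ (hg₂ v hv).1) (hIco₂ (hg₂ w hw).1)).mp ?_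
    rw [(hg₂ v hv).2, (hg₂ w hw).2]; exact hvw
  have hgcont₁ : ∀ v, y₁ xm₁ < v → ContinuousAt g₁ v := by
    intro v hv
    apply hgmono₁.continuousAt_of_image_mem_nhds (Ioi_mem_nhds hv)
    refine mem_nhds_iff.mpr ⟨Set.Ioo xm₁ x₀, ?_, isOpen_Ioo, (hg₁ v hv).1⟩
    intro x hx
    have hxv : y₁ xm₁ < y₁ x := hymono₁ hm₁Ico (hIco₁ hx) hx.1
    exact ⟨y₁ x, hxv, (huniq₁ (y₁ x) x hxv (hIco₁ hx) rfl).symm⟩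
  have hgcont₂ : ∀ v, y₂ xm₂ < v → ContinuousAt g₂ v := by
    intro v hv
    apply hgmono₂.continuousAt_of_image_mem_nhds (Ioi_mem_nhds hv)
    refine mem_nhds_iff.mpr ⟨Set.Ioo xm₂ x₀, ?_, isOpen_Ioo, (hg₂ v hv).1⟩
    intro x hx
    have hxv : y₂ xm₂ < y₂ x := hymono₂ hm₂Ico (hIco₂ hx) hx.1
    exact ⟨y₂ x, hxv, (huniq₂ (y₂ x) x hxv (hIco₂ hx) rfl).symm⟩
  have hgderiv₁ : ∀ v, y₁ xm₁ < v → HasDerivAt g₁ (y₁' (g₁ v))⁻¹ v := by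
    intro v hv
    refine HasDerivAt.of_local_left_inverse (hgcont₁ v hv)
      ((h₁ (g₁ v) (hsub₁ (hg₁ v hv).1)).1)
      (ne_of_gt (hypos₁ (g₁ v) (hg₁ v hv).1)) ?_
    filter_upwards [Ioi_mem_nhds hv] with w hw
    exact (hg₁ w hw).2
  have hgderiv₂ : ∀ v, y₂ xm₂ < v → HasDerivAt g₂ (y₂' (g₂ v))⁻¹ v := by
    intro v hv
    refine HasDerivAt.of_local_left_inverse (hgcont₂ v hv)
      ((h₂ (g₂ v) (hsub₂ (hg₂ v hv).1)).1)
      (ne_of_gt (hypos₂ (g₂ v) (hg₂ v hv).1)) ?_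
    filter_upwards [Ioi_mem_nhds hv] with w hw
    exact (hg₂ w hw).2
  -- derivatives of p₁, p₂, q, h
  have hp₁ : ∀ v, y₁ xm₁ < v →
      HasDerivAt (fun w => (y₁' (g₁ w)) ^ 2) (2 * (6 * v ^ 2 - g₁ v)) v := by
    intro v hv
    have hyd' := (h₁ (g₁ v) (hsub₁ (hg₁ v hv).1)).2
    have hpow := (hyd'.comp v (hgderiv₁ v hv)).pow 2
    simp only [Function.comp_apply] at hpow
    refine hpow.congr_deriv ?_
    have hne : y₁' (g₁ v) ≠ 0 := ne_of_gt (hypos₁ (g₁ v) (hg₁ v hv).1)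
    rw [(hg₁ v hv).2]
    field_simp
    ring
  have hp₂ : ∀ v, y₂ xm₂ < v →
      HasDerivAt (fun w => (y₂' (g₂ w)) ^ 2) (2 * (6 * v ^ 2 - g₂ v)) v := by
    intro v hv
    have hyd' := (h₂ (g₂ v) (hsub₂ (hg₂ v hv).1)).2
    have hpow := (hyd'.comp v (hgderiv₂ v hv)).pow 2
    simp only [Function.comp_apply] at hpow
    refine hpow.congr_deriv ?_
    have hne : y₂' (g₂ v) ≠ 0 := ne_of_gt (hypos₂ (g₂ v) (hg₂ v hv).1)
    rw [(hg₂ v hv).2]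
    field_simp
    ring
  have hq' : ∀ v, y₂ xm₂ < v →
      HasDerivAt (fun w => (y₁' (g₁ w)) ^ 2 - (y₂' (g₂ w)) ^ 2) (2 * (g₂ v - g₁ v)) v := by
    intro v hv
    have hv₁ : y₁ xm₁ < v := lt_of_le_of_lt hcon hv
    have := (hp₁ v hv₁).sub (hp₂ v hv)
    refine this.congr_deriv ?_
    ring
  have hh' : ∀ v, y₂ xm₂ < v →
      HasDerivAt (fun w => g₂ w - g₁ w) ((y₂' (g₂ v))⁻¹ - (y₁' (g₁ v))⁻¹) v :=
    fun v hv => (hgderiv₂ v hv).sub (hgderiv₁ v (lt_of_le_of_lt hcon hv))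
  -- monotonicity helpers
  have hqlt : ∀ u w, y₂ xm₂ < u → u < w →
      (∀ z, z ∈ Set.Ioo u w → 0 < g₂ z - g₁ z) →
      (y₁' (g₁ u)) ^ 2 - (y₂' (g₂ u)) ^ 2 < (y₁' (g₁ w)) ^ 2 - (y₂' (g₂ w)) ^ 2 := by
    intro u w hu huw hpos
    have hmono : StrictMonoOn (fun v => (y₁' (g₁ v)) ^ 2 - (y₂' (g₂ v)) ^ 2) (Set.Icc u w) := by
      apply strictMonoOn_of_deriv_pos (convex_Icc u w)
      · intro z hz
        exact ((hq' z (lt_of_lt_of_le hu hz.1)).continuousAt).continuousWithinAt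
      · intro z hz
        rw [interior_Icc] at hz
        rw [(hq' z (hu.trans hz.1)).deriv]
        linarith [hpos z hz]
    have := hmono (Set.left_mem_Icc.mpr (le_of_lt huw)) (Set.right_mem_Icc.mpr (le_of_lt huw)) huw
    simpa using this
  have hhgt : ∀ u w, y₂ xm₂ < u → u < w →
      (∀ z, z ∈ Set.Ioo u w → (y₁' (g₁ z)) ^ 2 - (y₂' (g₂ z)) ^ 2 < 0) →
      g₂ w - g₁ w < g₂ u - g₁ u := by
    intro u w hu huw hneg
    have hmono : StrictAntiOn (fun v => g₂ v - g₁ v) (Set.Icc u w) := by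
      apply strictAntiOn_of_deriv_neg (convex_Icc u w)
      · intro z hz
        exact ((hh' z (lt_of_lt_of_le hu hz.1)).continuousAt).continuousWithinAt
      · intro z hz
        rw [interior_Icc] at hz
        have hz₂ : y₂ xm₂ < z := hu.trans hz.1
        have hz₁ : y₁ xm₁ < z := lt_of_le_of_lt hcon hz₂
        rw [(hh' z hz₂).deriv]
        have p1 : 0 < y₁' (g₁ z) := hypos₁ _ (hg₁ z hz₁).1
        have p2 : 0 < y₂' (g₂ z) := hypos₂ _ (hg₂ z hz₂).1
        have hlt : y₁' (g₁ z) < y₂' (g₂ z) := by nlinarith [hneg z hz]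
        have := inv_strictAnti₀ p1 hlt
        linarith
    have := hmono (Set.left_mem_Icc.mpr (le_of_lt huw)) (Set.right_mem_Icc.mpr (le_of_lt huw)) huw
    simpa using this
  -- a threshold V₀ beyond which part A applies
  set l' : ℝ := max (max xm₁ xm₂) l with hl'def
  have hl'1 : xm₁ ≤ l' := le_trans (le_max_left _ _) (le_max_left _ _)
  have hl'2 : xm₂ ≤ l' := le_trans (le_max_right _ _) (le_max_left _ _)
  have hl'3 : l ≤ l' := le_max_right _ _
  have hl'x : l' < x₀ := max_lt (max_lt hxm₁.2 hxm₂.2) hlx₀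
  set V₀ : ℝ := max (max (y₁ l') (y₂ l') + 1) (y₂ xm₂ + 1) with hV₀def
  have hV₀m : y₂ xm₂ < V₀ := lt_of_lt_of_le (lt_add_one _) (le_max_right _ _)
  have hkey : ∀ v, V₀ ≤ v →
      (y₁' (g₁ v)) ^ 2 - (y₂' (g₂ v)) ^ 2 < 0 ∧ 0 < g₂ v - g₁ v := by
    intro v hv
    have hv₂ : y₂ xm₂ < v := lt_of_lt_of_le hV₀m hv
    have hv₁ : y₁ xm₁ < v := lt_of_le_of_lt hcon hv₂
    have hgv₁ := hg₁ v hv₁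
    have hgv₂ := hg₂ v hv₂
    have hyl : max (y₁ l') (y₂ l') + 1 ≤ v := le_trans (le_max_left _ _) hv
    have hg₁l : l' < g₁ v := by
      refine (hymono₁.lt_iff_lt ⟨hl'1, hl'x⟩ (hIco₁ hgv₁.1)).mp ?_
      rw [hgv₁.2]
      have := le_max_left (y₁ l') (y₂ l')
      linarith
    have hg₂l : l' < g₂ v := by
      refine (hymono₂.lt_iff_lt ⟨hl'2, hl'x⟩ (hIco₂ hgv₂.1)).mp ?_
      rw [hgv₂.2]
      have := le_max_right (y₁ l') (y₂ l')
      linarith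
    have hg₁A : g₁ v ∈ Set.Ioo l x₀ := ⟨lt_of_le_of_lt hl'3 hg₁l, hgv₁.1.2⟩
    have hg₂A : g₂ v ∈ Set.Ioo l x₀ := ⟨lt_of_le_of_lt hl'3 hg₂l, hgv₂.1.2⟩
    have hA₁ := hlsub hg₁A
    simp only [Set.mem_setOf_eq] at hA₁
    have hgg : g₁ v < g₂ v := by
      refine (hymono₂.lt_iff_lt ⟨le_of_lt (lt_of_le_of_lt hl'2 hg₁l), hgv₁.1.2⟩
        (hIco₂ hgv₂.1)).mp ?_
      rw [hgv₂.2]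
      calc y₂ (g₁ v) < y₁ (g₁ v) := hA₁.1
        _ = v := hgv₁.2
    have hd₂ : y₂' (g₁ v) < y₂' (g₂ v) :=
      hmono₂' ⟨lt_of_lt_of_le (lt_of_lt_of_le hxm₂.1 hl'2) (le_of_lt hg₁l), hgv₁.1.2⟩
        ⟨lt_of_lt_of_le (lt_of_lt_of_le hxm₂.1 hl'2) (le_of_lt hg₂l), hgv₂.1.2⟩ hgg
    have h1 : 0 < y₁' (g₁ v) := hA₁.2.1
    have h2 : y₁' (g₁ v) < y₂' (g₂ v) := lt_trans hA₁.2.2 hd₂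
    constructor
    · nlinarith
    · linarith
  -- barrier argument : good on all of (m₂, V₀]
  have hBempty : ∀ v, v ∈ Set.Ioc (y₂ xm₂) V₀ →
      (y₁' (g₁ v)) ^ 2 - (y₂' (g₂ v)) ^ 2 < 0 ∧ 0 < g₂ v - g₁ v := by
    by_contra hcon2
    push_neg at hcon2
    obtain ⟨v₀, hv₀, hbad⟩ := hcon2
    set B : Set ℝ := {v | v ∈ Set.Ioc (y₂ xm₂) V₀ ∧
      (0 ≤ (y₁' (g₁ v)) ^ 2 - (y₂' (g₂ v)) ^ 2 ∨ g₂ v - g₁ v ≤ 0)} with hBdef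
    have hBne : B.Nonempty := by
      refine ⟨v₀, hv₀, ?_⟩
      by_cases hq0 : (y₁' (g₁ v₀)) ^ 2 - (y₂' (g₂ v₀)) ^ 2 < 0
      · exact Or.inr (hbad hq0)
      · exact Or.inl (not_lt.mp hq0)
    have hBbdd : BddAbove B := ⟨V₀, fun bb hbb => hbb.1.2⟩
    set vs : ℝ := sSup B with hvsdef
    have hvs_le : vs ≤ V₀ := csSup_le hBne fun bb hbb => hbb.1.2
    have hvs_gt : y₂ xm₂ < vs := by
      obtain ⟨bb, hbb⟩ := hBne
      exact lt_of_lt_of_le hbb.1.1 (le_csSup hBbdd hbb)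
    have hup : ∀ w, vs < w →
        (y₁' (g₁ w)) ^ 2 - (y₂' (g₂ w)) ^ 2 < 0 ∧ 0 < g₂ w - g₁ w := by
      intro w hw
      by_cases hwV : w ≤ V₀
      · have hwB : w ∉ B := fun hwB => absurd (le_csSup hBbdd hwB) (not_le.mpr hw)
        have hnor : ¬(0 ≤ (y₁' (g₁ w)) ^ 2 - (y₂' (g₂ w)) ^ 2 ∨ g₂ w - g₁ w ≤ 0) :=
          fun hor => hwB ⟨⟨hvs_gt.trans hw, hwV⟩, hor⟩
        push_neg at hnor
        exact hnor
      · exact hkey w (le_of_not_ge hwV)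
    have hmain : (y₁' (g₁ vs)) ^ 2 - (y₂' (g₂ vs)) ^ 2 < 0 ∧ 0 < g₂ vs - g₁ vs := by
      rcases eq_or_lt_of_le hvs_le with heq | hlt'
      · rw [heq]; exact hkey V₀ le_rfl
      · constructor
        · have hq1 := hqlt vs V₀ hvs_gt hlt' (fun z hz => (hup z hz.1).2)
          have hqV := (hkey V₀ le_rfl).1
          linarith
        · have hh1 := hhgt vs V₀ hvs_gt hlt' (fun z hz => (hup z hz.1).1)
          have hhV := (hkey V₀ le_rfl).2
          linarith
    have hcq : ContinuousAt (fun w => (y₁' (g₁ w)) ^ 2 - (y₂' (g₂ w)) ^ 2) vs :=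
      (hq' vs hvs_gt).continuousAt
    have hch : ContinuousAt (fun w => g₂ w - g₁ w) vs :=
      (hh' vs hvs_gt).continuousAt
    have hev : ∀ᶠ w in 𝓝 vs,
        (y₁' (g₁ w)) ^ 2 - (y₂' (g₂ w)) ^ 2 < 0 ∧ 0 < g₂ w - g₁ w := by
      filter_upwards [hcq.eventually (eventually_lt_nhds hmain.1),
        hch.eventually (eventually_gt_nhds hmain.2)] with w hw1 hw2
      exact ⟨hw1, hw2⟩
    rw [Metric.eventually_nhds_iff] at hev
    obtain ⟨ε, hε, hball⟩ := hev
    obtain ⟨bb, hbbB, hbbgt⟩ := exists_lt_of_lt_csSup hBne (show vs - ε < vs by linarith)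
    have hble : bb ≤ vs := le_csSup hBbdd hbbB
    have hdist : dist bb vs < ε := by
      rw [Real.dist_eq, abs_lt]
      constructor <;> linarith
    have hgood := hball hdist
    rcases hbbB.2 with h1 | h1
    · linarith [hgood.1]
    · linarith [hgood.2]
  -- final contradiction near the minimum of y₂
  have hqV₀ : (y₁' (g₁ V₀)) ^ 2 - (y₂' (g₂ V₀)) ^ 2 < 0 := (hkey V₀ le_rfl).1
  have hsq2 : ContinuousAt (fun x => (y₂' x) ^ 2) xm₂ := ((h₂ xm₂ hxm₂).2.continuousAt).pow 2
  have hycont : ContinuousAt y₂ xm₂ := (h₂ xm₂ hxm₂).1.continuousAt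
  have hevx : ∀ᶠ x in 𝓝 xm₂,
      (y₂' x) ^ 2 < -((y₁' (g₁ V₀)) ^ 2 - (y₂' (g₂ V₀)) ^ 2) ∧ y₂ x < y₂ xm₂ + 1 := by
    have h1 : (fun x => (y₂' x) ^ 2) xm₂ < -((y₁' (g₁ V₀)) ^ 2 - (y₂' (g₂ V₀)) ^ 2) := by
      show (y₂' xm₂) ^ 2 < _
      rw [hzero₂]
      norm_num
      linarith [hqV₀]
    filter_upwards [hsq2.eventually (eventually_lt_nhds h1),
      hycont.eventually (eventually_lt_nhds (lt_add_one (y₂ xm₂)))] with x hx1 hx2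
    exact ⟨hx1, hx2⟩
  have hmemx : ∀ᶠ x in 𝓝[>] xm₂, x ∈ Set.Ioo xm₂ x₀ :=
    Filter.eventually_iff.mpr (Ioo_mem_nhdsGT_of_mem ⟨le_refl _, hxm₂.2⟩)
  obtain ⟨xh, hxh, hxhIoo⟩ := ((hevx.filter_mono nhdsWithin_le_nhds).and hmemx).exists
  have hvgt : y₂ xm₂ < y₂ xh := hymono₂ hm₂Ico (hIco₂ hxhIoo) hxhIoo.1
  have hvlt : y₂ xh < V₀ := lt_of_lt_of_le hxh.2 (le_max_right _ _)
  have hgxh : g₂ (y₂ xh) = xh := (huniq₂ (y₂ xh) xh hvgt (hIco₂ hxhIoo) rfl).symm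
  have hqmono2 := hqlt (y₂ xh) V₀ hvgt hvlt
    (fun z hz => (hBempty z ⟨hvgt.trans hz.1, le_of_lt hz.2⟩).2)
  rw [hgxh] at hqmono2
  have hp1nn : 0 ≤ (y₁' (g₁ (y₂ xh))) ^ 2 := sq_nonneg _
  linarith [hxh.1]
end

section
/- (Moore–Nehari comparison for Painlevé I) Let y₁, y₂, y₃ be solutions of y'' = 6y² − x whose intervals of existence contain [α, β] ⊂ (−∞, 0]. If y₁(x) > y₃(x) and y₂(x) > y₃(x) for x ∈ (α, β), and y₁ ≥ y₃, y₂ ≥ y₃ at the endpoints α, β, then the graphs of y₁ and y₂ intersect at most once in [α, β]. -/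
open Filter Set Topology

/-- If `f` has derivative `d` at `a`, vanishes at `a`, and is nonnegative on `(a,b)`,
then `d ≥ 0`. -/
private lemma aux_deriv_nonneg_right {f : ℝ → ℝ} {d a b : ℝ} (hab : a < b)
    (hf : HasDerivAt f d a) (h0 : f a = 0) (hpos : ∀ x ∈ Set.Ioo a b, 0 ≤ f x) : 0 ≤ d := by
  have hs : Tendsto (slope f a) (𝓝[>] a) (𝓝 d) :=
    (hasDerivAt_iff_tendsto_slope.mp hf).mono_left
      (nhdsWithin_mono _ fun x hx => ne_of_gt hx)
  refine ge_of_tendsto hs ?_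
  filter_upwards [Ioo_mem_nhdsGT hab] with x hx
  rw [slope_def_field, h0, sub_zero]
  exact div_nonneg (hpos x hx) (by linarith [hx.1])

private lemma aux_deriv_nonpos_left {f : ℝ → ℝ} {d a b : ℝ} (hab : a < b)
    (hf : HasDerivAt f d b) (h0 : f b = 0) (hpos : ∀ x ∈ Set.Ioo a b, 0 ≤ f x) : d ≤ 0 := by
  have hs : Tendsto (slope f b) (𝓝[<] b) (𝓝 d) :=
    (hasDerivAt_iff_tendsto_slope.mp hf).mono_left
      (nhdsWithin_mono _ fun x hx => ne_of_lt hx)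
  refine le_of_tendsto hs ?_
  filter_upwards [Ioo_mem_nhdsLT hab] with x hx
  rw [slope_def_field, h0, sub_zero]
  exact div_nonpos_of_nonneg_of_nonpos (hpos x hx) (by linarith [hx.2])

private lemma aux_deriv_zero_left {f : ℝ → ℝ} {d a b : ℝ} (hab : a < b)
    (hf : HasDerivAt f d b) (h0 : f b = 0) (hz : ∀ x ∈ Set.Ioo a b, f x = 0) : d = 0 := by
  have hs : Tendsto (slope f b) (𝓝[<] b) (𝓝 d) :=
    (hasDerivAt_iff_tendsto_slope.mp hf).mono_left
      (nhdsWithin_mono _ fun x hx => ne_of_lt hx)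
  have hs0 : Tendsto (slope f b) (𝓝[<] b) (𝓝 0) := by
    refine Tendsto.congr' ?_ tendsto_const_nhds
    filter_upwards [Ioo_mem_nhdsLT hab] with x hx
    rw [slope_def_field, h0, hz x hx, sub_zero, zero_div]
  exact (tendsto_nhds_unique hs0 hs).symm

private lemma aux_deriv_zero_right {f : ℝ → ℝ} {d a b : ℝ} (hab : a < b)
    (hf : HasDerivAt f d a) (h0 : f a = 0) (hz : ∀ x ∈ Set.Ioo a b, f x = 0) : d = 0 := by
  have hs : Tendsto (slope f a) (𝓝[>] a) (𝓝 d) :=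
    (hasDerivAt_iff_tendsto_slope.mp hf).mono_left
      (nhdsWithin_mono _ fun x hx => ne_of_gt hx)
  have hs0 : Tendsto (slope f a) (𝓝[>] a) (𝓝 0) := by
    refine Tendsto.congr' ?_ tendsto_const_nhds
    filter_upwards [Ioo_mem_nhdsGT hab] with x hx
    rw [slope_def_field, h0, hz x hx, sub_zero, zero_div]
  exact (tendsto_nhds_unique hs0 hs).symm

/-- bracketing of a positive point by consecutive zeros -/
private lemma aux_bracket {w : ℝ → ℝ} {s t c : ℝ} (hw : ContinuousOn w (Set.Icc s t))
    (hc : c ∈ Set.Ioo s t) (hws : w s = 0) (hwt : w t = 0) (hwc : 0 < w c) :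
    ∃ a b, s ≤ a ∧ a < c ∧ c < b ∧ b ≤ t ∧ w a = 0 ∧ w b = 0 ∧
      ∀ x ∈ Set.Ioo a b, 0 < w x := by
  obtain ⟨hsc, hct⟩ := hc
  have hwsc : ContinuousOn w (Set.Icc s c) := hw.mono (Icc_subset_Icc_right hct.le)
  have hwct : ContinuousOn w (Set.Icc c t) := hw.mono (Icc_subset_Icc_left hsc.le)
  set A : Set ℝ := {x ∈ Set.Icc s c | w x = 0} with hA
  set B : Set ℝ := {x ∈ Set.Icc c t | w x = 0} with hB
  have hAne : A.Nonempty := ⟨s, ⟨le_refl s, hsc.le⟩, hws⟩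
  have hBne : B.Nonempty := ⟨t, ⟨hct.le, le_refl t⟩, hwt⟩
  have hAclosed : IsClosed A := by
    exact hwsc.preimage_isClosed_of_isClosed isClosed_Icc isClosed_singleton (t := {0})
  have hBclosed : IsClosed B := by
    exact hwct.preimage_isClosed_of_isClosed isClosed_Icc isClosed_singleton (t := {0})
  have hAbdd : BddAbove A := ⟨c, fun x hx => hx.1.2⟩
  have hBbdd : BddBelow B := ⟨c, fun x hx => hx.1.1⟩
  have haA : sSup A ∈ A := hAclosed.csSup_mem hAne hAbdd
  have hbB : sInf B ∈ B := hBclosed.csInf_mem hBne hBbdd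
  set a := sSup A
  set b := sInf B
  have hac : a < c := lt_of_le_of_ne haA.1.2 (fun h => hwc.ne' (h ▸ haA.2))
  have hcb : c < b := lt_of_le_of_ne hbB.1.1 (fun h => hwc.ne' (h ▸ hbB.2))
  refine ⟨a, b, haA.1.1, hac, hcb, hbB.1.2, haA.2, hbB.2, ?_⟩
  intro x hx
  by_contra hneg
  push_neg at hneg
  rcases lt_trichotomy x c with hxc | rfl | hcx
  · -- zero in [x, c], contradicting sSup
    have hsub : Set.Icc x c ⊆ Set.Icc s c := Icc_subset_Icc (haA.1.1.trans hx.1.le) le_rfl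
    have : (0:ℝ) ∈ Set.Icc (w x) (w c) := ⟨hneg, hwc.le⟩
    obtain ⟨z, hz, hz0⟩ := intermediate_value_Icc hxc.le (hwsc.mono hsub) this
    have hzA : z ∈ A := ⟨⟨haA.1.1.trans (hx.1.le.trans hz.1), hz.2⟩, hz0⟩
    have : z ≤ a := le_csSup hAbdd hzA
    have : x ≤ a := le_trans hz.1 this
    exact absurd this (not_le.mpr hx.1)
  · exact absurd hwc (not_lt.mpr hneg)
  · have hsub : Set.Icc c x ⊆ Set.Icc c t := Icc_subset_Icc le_rfl (hx.2.le.trans hbB.1.2)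
    have : (0:ℝ) ∈ Set.Icc (w x) (w c) := ⟨hneg, hwc.le⟩
    obtain ⟨z, hz, hz0⟩ := intermediate_value_Icc' hcx.le (hwct.mono hsub) this
    have hzB : z ∈ B := ⟨⟨hz.1, hz.2.trans (hx.2.le.trans hbB.1.2)⟩, hz0⟩
    have : b ≤ z := csInf_le hBbdd hzB
    have : b ≤ x := this.trans hz.2
    exact absurd this (not_le.mpr hx.2)

/-- Sturm comparison core: two solutions equal at `a < b` with `y₁ > y₂` in between,
both dominating `y₃`: contradiction. -/
private lemma aux_sturm
    (α β : ℝ)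
    (y₁ y₁' y₂ y₂' y₃ y₃' : ℝ → ℝ)
    (h₁ : ∀ x ∈ Set.Icc α β,
      HasDerivAt y₁ (y₁' x) x ∧ HasDerivAt y₁' (6 * (y₁ x) ^ 2 - x) x)
    (h₂ : ∀ x ∈ Set.Icc α β,
      HasDerivAt y₂ (y₂' x) x ∧ HasDerivAt y₂' (6 * (y₂ x) ^ 2 - x) x)
    (h₃ : ∀ x ∈ Set.Icc α β,
      HasDerivAt y₃ (y₃' x) x ∧ HasDerivAt y₃' (6 * (y₃ x) ^ 2 - x) x)
    (hdom : ∀ x ∈ Set.Ioo α β, y₃ x < y₁ x ∧ y₃ x < y₂ x)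
    (hendα : y₃ α ≤ y₁ α ∧ y₃ α ≤ y₂ α)
    (hendβ : y₃ β ≤ y₁ β ∧ y₃ β ≤ y₂ β)
    (a b : ℝ) (ha : a ∈ Set.Icc α β) (hb : b ∈ Set.Icc α β) (hab : a < b)
    (hwa : y₁ a = y₂ a) (hwb : y₁ b = y₂ b)
    (hpos : ∀ x ∈ Set.Ioo a b, y₂ x < y₁ x) : False := by
  have hIcc : Set.Icc a b ⊆ Set.Icc α β := Icc_subset_Icc ha.1 hb.2
  have hIoo : Set.Ioo a b ⊆ Set.Ioo α β := Ioo_subset_Ioo ha.1 hb.2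
  set W : ℝ → ℝ := fun x =>
    (y₁' x - y₂' x) * (y₁ x - y₃ x) - (y₁ x - y₂ x) * (y₁' x - y₃' x) with hWdef
  have hW : ∀ x ∈ Set.Icc α β,
      HasDerivAt W (6 * (y₁ x - y₂ x) * (y₁ x - y₃ x) * (y₂ x - y₃ x)) x := by
    intro x hx
    obtain ⟨d1, d1'⟩ := h₁ x hx
    obtain ⟨d2, d2'⟩ := h₂ x hx
    obtain ⟨d3, d3'⟩ := h₃ x hx
    have H := ((d1'.sub d2').mul (d1.sub d3)).sub ((d1.sub d2).mul (d1'.sub d3'))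
    refine H.congr_deriv ?_
    simp only [Pi.sub_apply]; ring
  -- endpoint sign facts
  have haβ : a < β := lt_of_lt_of_le hab hb.2
  have hαb : α < b := lt_of_le_of_lt ha.1 hab
  have hza : 0 ≤ y₁ a - y₃ a := by
    rcases eq_or_lt_of_le ha.1 with h | h
    · rw [← h]; linarith [hendα.1]
    · linarith [(hdom a ⟨h, haβ⟩).1]
  have hzb : 0 ≤ y₁ b - y₃ b := by
    rcases eq_or_lt_of_le hb.2 with h | h
    · rw [h]; linarith [hendβ.1]
    · linarith [(hdom b ⟨hαb, h⟩).1]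
  -- derivative signs of w at the endpoints
  have hw'a : 0 ≤ y₁' a - y₂' a := by
    refine aux_deriv_nonneg_right hab (((h₁ a (hIcc (left_mem_Icc.mpr hab.le))).1).sub
      ((h₂ a (hIcc (left_mem_Icc.mpr hab.le))).1)) (by simp only [Pi.sub_apply]; linarith) ?_
    intro x hx; simp only [Pi.sub_apply]; linarith [hpos x hx]
  have hw'b : y₁' b - y₂' b ≤ 0 := by
    refine aux_deriv_nonpos_left hab (((h₁ b (hIcc (right_mem_Icc.mpr hab.le))).1).sub
      ((h₂ b (hIcc (right_mem_Icc.mpr hab.le))).1)) (by simp only [Pi.sub_apply]; linarith) ?_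
    intro x hx; simp only [Pi.sub_apply]; linarith [hpos x hx]
  -- W is strictly monotone on [a,b]
  have hWmono : StrictMonoOn W (Set.Icc a b) := by
    refine strictMonoOn_of_deriv_pos (convex_Icc a b) ?_ ?_
    · intro x hx
      exact ((hW x (hIcc hx)).continuousAt).continuousWithinAt
    · intro x hx
      rw [interior_Icc] at hx
      rw [(hW x (hIcc (Ioo_subset_Icc_self hx))).deriv]
      have h1 : 0 < y₁ x - y₂ x := by linarith [hpos x hx]
      have h2 : 0 < y₁ x - y₃ x := by linarith [(hdom x (hIoo hx)).1]
      have h3 : 0 < y₂ x - y₃ x := by linarith [(hdom x (hIoo hx)).2]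
      positivity
  have hlt : W a < W b := hWmono (left_mem_Icc.mpr hab.le) (right_mem_Icc.mpr hab.le) hab
  have hWa : 0 ≤ W a := by
    have : W a = (y₁' a - y₂' a) * (y₁ a - y₃ a) - 0 * (y₁' a - y₃' a) := by
      rw [hWdef]; simp only; rw [show y₁ a - y₂ a = 0 by linarith]
    rw [this]
    have := mul_nonneg hw'a hza
    linarith
  have hWb : W b ≤ 0 := by
    have : W b = (y₁' b - y₂' b) * (y₁ b - y₃ b) - 0 * (y₁' b - y₃' b) := by
      rw [hWdef]; simp only; rw [show y₁ b - y₂ b = 0 by linarith]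
    rw [this]
    have := mul_nonpos_of_nonpos_of_nonneg hw'b hzb
    linarith
  linarith

/-- Uniqueness: if two solutions agree to first order at a point, they agree on `[α, β]`. -/
private lemma aux_unique
    (α β : ℝ) (hαβ : α ≤ β)
    (y₁ y₁' y₂ y₂' : ℝ → ℝ)
    (h₁ : ∀ x ∈ Set.Icc α β,
      HasDerivAt y₁ (y₁' x) x ∧ HasDerivAt y₁' (6 * (y₁ x) ^ 2 - x) x)
    (h₂ : ∀ x ∈ Set.Icc α β,
      HasDerivAt y₂ (y₂' x) x ∧ HasDerivAt y₂' (6 * (y₂ x) ^ 2 - x) x)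
    (t : ℝ) (ht : t ∈ Set.Icc α β) (h0 : y₁ t = y₂ t) (h0' : y₁' t = y₂' t) :
    ∀ x ∈ Set.Icc α β, y₁ x = y₂ x := by
  -- projection onto [α, β]
  set π : ℝ → ℝ := fun x => max α (min x β) with hπdef
  have hπmem : ∀ x, π x ∈ Set.Icc α β := fun x =>
    ⟨le_max_left _ _, max_le hαβ (min_le_right _ _)⟩
  have hπid : ∀ x ∈ Set.Icc α β, π x = x := by
    intro x hx
    rw [hπdef]; simp only
    rw [min_eq_left hx.2, max_eq_right hx.1]
  have hπcont : Continuous π := continuous_const.max (continuous_id.min continuous_const)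
  have hy₁c : ContinuousOn y₁ (Set.Icc α β) := fun x hx =>
    (h₁ x hx).1.continuousAt.continuousWithinAt
  have hy₂c : ContinuousOn y₂ (Set.Icc α β) := fun x hx =>
    (h₂ x hx).1.continuousAt.continuousWithinAt
  set q : ℝ → ℝ := fun x => 6 * (y₁ (π x) + y₂ (π x)) with hqdef
  have hq0c : ContinuousOn (fun x => 6 * (y₁ x + y₂ x)) (Set.Icc α β) :=
    (continuousOn_const.mul (hy₁c.add hy₂c))
  obtain ⟨C, hC⟩ := isCompact_Icc.exists_bound_of_continuousOn hq0c
  have hqbound : ∀ x, |q x| ≤ max C 0 := by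
    intro x
    have := hC (π x) (hπmem x)
    rw [Real.norm_eq_abs] at this
    exact this.trans (le_max_left _ _)
  have hqIcc : ∀ x ∈ Set.Icc α β, q x = 6 * (y₁ x + y₂ x) := by
    intro x hx; rw [hqdef]; simp only [hπid x hx]
  -- Lipschitz vector field
  set K : NNReal := ⟨max 1 (max C 0), le_trans zero_le_one (le_max_left _ _)⟩ with hKdef
  have hK1 : (1:ℝ) ≤ (K:ℝ) := le_max_left _ _
  have hKC : max C 0 ≤ (K:ℝ) := le_max_right _ _
  set v : ℝ → ℝ × ℝ → ℝ × ℝ := fun u p => (p.2, q u * p.1) with hvdef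
  have hv : ∀ u, LipschitzOnWith K (v u) Set.univ := by
    intro u
    refine LipschitzWith.lipschitzOnWith (LipschitzWith.of_dist_le_mul fun p p' => ?_)
    have h1 : dist p.1 p'.1 ≤ dist p p' := by rw [Prod.dist_eq]; exact le_max_left _ _
    have h2 : dist p.2 p'.2 ≤ dist p p' := by rw [Prod.dist_eq]; exact le_max_right _ _
    rw [hvdef]; simp only
    rw [Prod.dist_eq]
    refine max_le ?_ ?_
    · calc dist p.2 p'.2 ≤ dist p p' := h2
        _ ≤ (K:ℝ) * dist p p' := le_mul_of_one_le_left dist_nonneg hK1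
    · have : dist (q u * p.1) (q u * p'.1) = |q u| * dist p.1 p'.1 := by
        rw [Real.dist_eq, Real.dist_eq, ← mul_sub, abs_mul]
      rw [this]
      calc |q u| * dist p.1 p'.1 ≤ (K:ℝ) * dist p p' :=
        mul_le_mul ((hqbound u).trans hKC) h1 dist_nonneg (le_trans zero_le_one hK1)
        _ = (K:ℝ) * dist p p' := rfl
  -- the vector solution and the zero solution
  set f : ℝ → ℝ × ℝ := fun x => (y₁ x - y₂ x, y₁' x - y₂' x) with hfdef
  set g : ℝ → ℝ × ℝ := fun _ => ((0:ℝ), (0:ℝ)) with hgdef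
  have hfd : ∀ x ∈ Set.Icc α β, HasDerivAt f (v x (f x)) x := by
    intro x hx
    obtain ⟨d1, d1'⟩ := h₁ x hx
    obtain ⟨d2, d2'⟩ := h₂ x hx
    have H := (d1.sub d2).prodMk (d1'.sub d2')
    refine H.congr_deriv ?_
    rw [hvdef, hfdef]; simp only
    rw [hqIcc x hx, Prod.mk.injEq]
    exact ⟨rfl, by ring⟩
  have hgd : ∀ x : ℝ, HasDerivAt g (v x (g x)) x := by
    intro x
    have : v x (g x) = ((0:ℝ), (0:ℝ)) := by rw [hvdef, hgdef]; simp
    rw [this]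
    exact hasDerivAt_const x _
  have hfc : ContinuousOn f (Set.Icc α β) := fun x hx =>
    (hfd x hx).continuousAt.continuousWithinAt
  have hft : f t = g t := by
    rw [hfdef, hgdef]; simp only [Prod.mk.injEq]
    constructor <;> linarith
  have key : Set.EqOn f g (Set.Icc α β) := by
    have hr : Set.EqOn f g (Set.Icc t β) := by
      refine ODE_solution_unique_of_mem_Icc_right (s := fun _ => Set.univ) (fun u _ => hv u)
        (hfc.mono (Icc_subset_Icc ht.1 le_rfl)) ?_ (fun _ _ => trivial)
        (continuousOn_const) ?_ (fun _ _ => trivial) hft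
      · intro u hu
        exact (hfd u ⟨ht.1.trans hu.1, hu.2.le⟩).hasDerivWithinAt
      · intro u hu
        exact (hgd u).hasDerivWithinAt
    have hl : Set.EqOn f g (Set.Icc α t) := by
      refine ODE_solution_unique_of_mem_Icc_left (s := fun _ => Set.univ) (fun u _ => hv u)
        (hfc.mono (Icc_subset_Icc le_rfl ht.2)) ?_ (fun _ _ => trivial)
        (continuousOn_const) ?_ (fun _ _ => trivial) hft
      · intro u hu
        exact (hfd u ⟨hu.1.le, hu.2.trans ht.2⟩).hasDerivWithinAt
      · intro u hu
        exact (hgd u).hasDerivWithinAt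
    intro x hx
    rcases le_total x t with h | h
    · exact hl ⟨hx.1, h⟩
    · exact hr ⟨h, hx.2⟩
  intro x hx
  have := key hx
  rw [hfdef, hgdef] at this
  simp only [Prod.mk.injEq] at this
  linarith [this.1]

/-- Moore–Nehari comparison for Painlevé I: if `y₁, y₂` strictly dominate a
third solution `y₃` on `(α, β)` (with weak domination at the endpoints),
`[α, β] ⊆ (-∞, 0]`, and `y₁, y₂` are distinct, then the graphs of `y₁` and
`y₂` intersect at most once in `[α, β]`. -/
theorem painleveI_moore_nehari
    (α β : ℝ) (hαβ : α < β) (hβ : β ≤ 0)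
    (y₁ y₁' y₂ y₂' y₃ y₃' : ℝ → ℝ)
    (h₁ : ∀ x ∈ Set.Icc α β,
      HasDerivAt y₁ (y₁' x) x ∧ HasDerivAt y₁' (6 * (y₁ x) ^ 2 - x) x)
    (h₂ : ∀ x ∈ Set.Icc α β,
      HasDerivAt y₂ (y₂' x) x ∧ HasDerivAt y₂' (6 * (y₂ x) ^ 2 - x) x)
    (h₃ : ∀ x ∈ Set.Icc α β,
      HasDerivAt y₃ (y₃' x) x ∧ HasDerivAt y₃' (6 * (y₃ x) ^ 2 - x) x)
    (hdom : ∀ x ∈ Set.Ioo α β, y₃ x < y₁ x ∧ y₃ x < y₂ x)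
    (hendα : y₃ α ≤ y₁ α ∧ y₃ α ≤ y₂ α)
    (hendβ : y₃ β ≤ y₁ β ∧ y₃ β ≤ y₂ β)
    (hne : ∃ x ∈ Set.Icc α β, y₁ x ≠ y₂ x) :
    ∀ s ∈ Set.Icc α β, ∀ t ∈ Set.Icc α β,
      y₁ s = y₂ s → y₁ t = y₂ t → s = t := by
  suffices H : ∀ s ∈ Set.Icc α β, ∀ t ∈ Set.Icc α β,
      s < t → y₁ s = y₂ s → y₁ t = y₂ t → False by
    intro s hs t ht es et
    by_contra hne'
    rcases lt_or_gt_of_ne hne' with h | h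
    · exact H s hs t ht h es et
    · exact H t ht s hs h et es
  intro s hs t ht hst es et
  have hsub : Set.Icc s t ⊆ Set.Icc α β := Icc_subset_Icc hs.1 ht.2
  by_cases hc : ∃ c ∈ Set.Ioo s t, y₁ c ≠ y₂ c
  · obtain ⟨c, hcmem, hcne⟩ := hc
    have hy₁c : ContinuousOn y₁ (Set.Icc α β) := fun x hx =>
      (h₁ x hx).1.continuousAt.continuousWithinAt
    have hy₂c : ContinuousOn y₂ (Set.Icc α β) := fun x hx =>
      (h₂ x hx).1.continuousAt.continuousWithinAt
    rcases hcne.lt_or_gt with h | h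
    · -- y₁ c < y₂ c : use w = y₂ - y₁ and swap the roles of y₁, y₂
      have hwcont : ContinuousOn (fun x => y₂ x - y₁ x) (Set.Icc s t) :=
        ((hy₂c.sub hy₁c).mono hsub)
      obtain ⟨a, b, has, hac, hcb, hbt, hwa, hwb, hpos⟩ :=
        aux_bracket hwcont hcmem (by linarith) (by linarith) (by linarith)
      have hamem : a ∈ Set.Icc α β :=
        ⟨hs.1.trans has, le_trans (le_trans (hac.trans hcb).le hbt) ht.2⟩
      have hbmem : b ∈ Set.Icc α β := ⟨le_trans hs.1 (has.trans (hac.trans hcb).le), hbt.trans ht.2⟩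
      exact aux_sturm α β y₂ y₂' y₁ y₁' y₃ y₃' h₂ h₁ h₃
        (fun x hx => ⟨(hdom x hx).2, (hdom x hx).1⟩) ⟨hendα.2, hendα.1⟩ ⟨hendβ.2, hendβ.1⟩
        a b hamem hbmem (hac.trans hcb) (by linarith) (by linarith)
        (fun x hx => by linarith [hpos x hx])
    · -- y₂ c < y₁ c
      have hwcont : ContinuousOn (fun x => y₁ x - y₂ x) (Set.Icc s t) :=
        ((hy₁c.sub hy₂c).mono hsub)
      obtain ⟨a, b, has, hac, hcb, hbt, hwa, hwb, hpos⟩ :=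
        aux_bracket hwcont hcmem (by linarith) (by linarith) (by linarith)
      have hamem : a ∈ Set.Icc α β :=
        ⟨hs.1.trans has, le_trans (le_trans (hac.trans hcb).le hbt) ht.2⟩
      have hbmem : b ∈ Set.Icc α β := ⟨le_trans hs.1 (has.trans (hac.trans hcb).le), hbt.trans ht.2⟩
      exact aux_sturm α β y₁ y₁' y₂ y₂' y₃ y₃' h₁ h₂ h₃ hdom hendα hendβ
        a b hamem hbmem (hac.trans hcb) (by linarith) (by linarith)
        (fun x hx => by linarith [hpos x hx])
  · -- degenerate case: y₁ = y₂ on all of [s, t]; use uniqueness of the ODE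
    push_neg at hc
    have htmem : t ∈ Set.Icc α β := ht
    have hd : HasDerivAt (fun x => y₁ x - y₂ x) (y₁' t - y₂' t) t :=
      ((h₁ t htmem).1).sub ((h₂ t htmem).1)
    have h0' : y₁' t - y₂' t = 0 :=
      aux_deriv_zero_left hst hd (by linarith)
        (fun x hx => by linarith [hc x hx])
    obtain ⟨x₀, hx₀, hx₀ne⟩ := hne
    exact hx₀ne (aux_unique α β hαβ.le y₁ y₁' y₂ y₂' h₁ h₂ t htmem et (by linarith) x₀ hx₀)
end

section
/- For the linearization Y'' = 12 y(x) Y of the first Painlevé equation along a solution y with a double pole at x₁, the Wronskian of the two solutions ∂_{x₁} y(x; x₁, c₁) and ∂_{c₁} y(x; x₁, c₁) is constant in x and equals 14. -/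
open Filter Set Topology

/-- For the linearization `Y'' = 12 y Y` of Painlevé I along a solution `y`
with a double pole at `x₁`, the Wronskian of the two parameter-derivative
solutions — the one behaving like `∂_{x₁}y ~ 2(x-x₁)⁻³` and the one behaving
like `∂_{c₁}y ~ (x-x₁)⁴` — is constant in `x` and equals `14`. -/
theorem painleveI_wronskian_fourteen (x₁ r : ℝ) (hr : 0 < r)
    (y y' Y₁ Y₁' Y₂ Y₂' : ℝ → ℝ)
    (hode : ∀ x : ℝ, x ≠ x₁ → |x - x₁| < r →
      HasDerivAt y (y' x) x ∧ HasDerivAt y' (6 * (y x) ^ 2 - x) x)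
    (hpole : Tendsto (fun x : ℝ => (x - x₁) ^ 2 * y x) (𝓝[≠] x₁) (𝓝 1))
    (hlin₁ : ∀ x : ℝ, x ≠ x₁ → |x - x₁| < r →
      HasDerivAt Y₁ (Y₁' x) x ∧ HasDerivAt Y₁' (12 * y x * Y₁ x) x)
    (hlin₂ : ∀ x : ℝ, x ≠ x₁ → |x - x₁| < r →
      HasDerivAt Y₂ (Y₂' x) x ∧ HasDerivAt Y₂' (12 * y x * Y₂ x) x)
    (hasym₁ : Tendsto (fun x : ℝ => (x - x₁) ^ 3 * Y₁ x) (𝓝[≠] x₁) (𝓝 2))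
    (hasym₁' : Tendsto (fun x : ℝ => (x - x₁) ^ 4 * Y₁' x) (𝓝[≠] x₁) (𝓝 (-6)))
    (hasym₂ : Tendsto (fun x : ℝ => Y₂ x / (x - x₁) ^ 4) (𝓝[≠] x₁) (𝓝 1))
    (hasym₂' : Tendsto (fun x : ℝ => Y₂' x / (x - x₁) ^ 3) (𝓝[≠] x₁) (𝓝 4)) :
    ∀ x : ℝ, x ≠ x₁ → |x - x₁| < r →
      Y₁ x * Y₂' x - Y₁' x * Y₂ x = 14 := by
  set W : ℝ → ℝ := fun x => Y₁ x * Y₂' x - Y₁' x * Y₂ x with hWdef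
  -- limit of W at the pole
  have hWlim : Tendsto W (𝓝[≠] x₁) (𝓝 14) := by
    have h1 : Tendsto (fun x => ((x - x₁) ^ 3 * Y₁ x) * (Y₂' x / (x - x₁) ^ 3))
        (𝓝[≠] x₁) (𝓝 (2 * 4)) := hasym₁.mul hasym₂'
    have h2 : Tendsto (fun x => ((x - x₁) ^ 4 * Y₁' x) * (Y₂ x / (x - x₁) ^ 4))
        (𝓝[≠] x₁) (𝓝 ((-6) * 1)) := hasym₁'.mul hasym₂
    have h3 := h1.sub h2
    norm_num at h3
    refine h3.congr' ?_
    filter_upwards [self_mem_nhdsWithin] with x hx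
    have hx' : x - x₁ ≠ 0 := sub_ne_zero.mpr hx
    simp only [hWdef]
    field_simp
  -- W has derivative zero
  have hW' : ∀ x : ℝ, x ≠ x₁ → |x - x₁| < r → HasDerivAt W 0 x := by
    intro x hx hxr
    obtain ⟨h1, h1'⟩ := hlin₁ x hx hxr
    obtain ⟨h2, h2'⟩ := hlin₂ x hx hxr
    have := (h1.mul h2').sub (h1'.mul h2)
    exact this.congr_deriv (by ring)
  -- constancy on any closed interval inside the domain
  have hconst : ∀ a b : ℝ, a ≤ b → (∀ z ∈ Icc a b, z ≠ x₁ ∧ |z - x₁| < r) →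
      W a = W b := by
    intro a b hab hS
    rcases eq_or_lt_of_le hab with h | h
    · rw [h]
    · obtain ⟨c, hc, hc'⟩ := exists_hasDerivAt_eq_slope W (fun _ => 0) h
        (fun z hz => ((hW' z (hS z hz).1 (hS z hz).2).continuousAt).continuousWithinAt)
        (fun z hz => hW' z (hS z (Ioo_subset_Icc_self hz)).1 (hS z (Ioo_subset_Icc_self hz)).2)
      have : W b - W a = 0 := by
        rw [eq_comm, div_eq_iff (sub_ne_zero.mpr (ne_of_gt h))] at hc'
        linarith
      linarith
  intro x hx hxr
  rcases lt_or_gt_of_ne hx with hlt | hgt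
  -- x < x₁ : use left limit
  · have hconst' : ∀ z ∈ Ioo (x₁ - r) x₁, x ≤ z → W z = W x := by
      intro z hz hxz
      exact (hconst x z hxz (fun w hw => by
        constructor
        · exact ne_of_lt (lt_of_le_of_lt hw.2 hz.2)
        · rw [abs_sub_lt_iff]
          constructor
          · linarith [hw.2, hz.2]
          · have : x₁ - r < x := by
              have := abs_sub_lt_iff.mp hxr
              linarith [this.2]
            linarith [hw.1])).symm
    have hmem : Ioo (max x (x₁ - r)) x₁ ∈ 𝓝[<] x₁ := by
      apply Ioo_mem_nhdsLT_of_mem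
      constructor
      · simp only [max_lt_iff]
        exact ⟨hlt, by linarith⟩
      · exact le_refl _
    have hW2 : Tendsto W (𝓝[<] x₁) (𝓝 (W x)) := by
      refine tendsto_const_nhds.congr' ?_
      filter_upwards [hmem] with z hz
      have : z ∈ Ioo (x₁ - r) x₁ := ⟨lt_of_le_of_lt (le_max_right _ _) hz.1, hz.2⟩
      exact (hconst' z this (le_of_lt (lt_of_le_of_lt (le_max_left _ _) hz.1))).symm
    have hW3 : Tendsto W (𝓝[<] x₁) (𝓝 14) :=
      hWlim.mono_left (nhdsWithin_mono _ (fun z hz => ne_of_lt hz))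
    exact tendsto_nhds_unique hW2 hW3
  -- x > x₁ : use right limit
  · have hconst' : ∀ z ∈ Ioo x₁ (x₁ + r), z ≤ x → W z = W x := by
      intro z hz hxz
      exact hconst z x hxz (fun w hw => by
        constructor
        · exact (ne_of_gt (lt_of_lt_of_le hz.1 hw.1))
        · rw [abs_sub_lt_iff]
          constructor
          · have : x < x₁ + r := by
              have := abs_sub_lt_iff.mp hxr
              linarith [this.1]
            linarith [hw.2]
          · linarith [hw.1, hz.1])
    have hmem : Ioo x₁ (min x (x₁ + r)) ∈ 𝓝[>] x₁ := by
      apply Ioo_mem_nhdsGT_of_mem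
      constructor
      · exact le_refl _
      · simp only [lt_min_iff]
        exact ⟨hgt, by linarith⟩
    have hW2 : Tendsto W (𝓝[>] x₁) (𝓝 (W x)) := by
      refine tendsto_const_nhds.congr' ?_
      filter_upwards [hmem] with z hz
      have : z ∈ Ioo x₁ (x₁ + r) := ⟨hz.1, lt_of_lt_of_le hz.2 (min_le_right _ _)⟩
      exact (hconst' z this (le_of_lt (lt_of_lt_of_le hz.2 (min_le_left _ _)))).symm
    have hW3 : Tendsto W (𝓝[>] x₁) (𝓝 14) :=
      hWlim.mono_left (nhdsWithin_mono _ (fun z hz => ne_of_gt hz))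
    exact tendsto_nhds_unique hW2 hW3
end
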